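/- For every real v > 1/2 and every tie-breaking rule, let (μ, ν) be a mixed Nash equilibrium of the AND–OR game. If 0 < b < c are such that ν{p : p.1 ≤ b} = ν{p : p.1 ≤ c} (OR never bids in (b,c] on item 1), ν{p : p.1 ≤ b} > 0 and μ{p : p.1 ≤ b} > 0, then ν{p : p.1 ≤ b} = 1 and μ{p : p.1 ≤ b} = 1. The same statement holds with the roles of μ and ν interchanged, and with the first coordinate replaced by the second. -/

import Mathlib

open MeasureTheory Set
open scoped ENNReal

noncomputable section

/-- A bid profile for one player: a bid on each of the two items. -/
abbrev Bid := ℝ × ℝ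

/-- The maximum allowed bid `H = max 1 v`. -/
def Hval (v : ℝ) : ℝ := max 1 v

/-- The set of allowed bids `[0,H] × [0,H]`. -/
def box (v : ℝ) : Set Bid := Icc (0:ℝ) (Hval v) ×ˢ Icc (0:ℝ) (Hval v)

/-- A tie-breaking rule: measurable functions `t₁ t₂ : ℝ → [0,1]`, where `tᵢ x` is the
probability that AND wins item `i` when both players bid `x` on it. -/
structure TieRule where
  t1 : ℝ → ℝ
  t2 : ℝ → ℝ
  meas1 : Measurable t1
  meas2 : Measurable t2
  t1_nonneg : ∀ x, 0 ≤ t1 x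
  t1_le_one : ∀ x, t1 x ≤ 1
  t2_nonneg : ∀ x, 0 ≤ t2 x
  t2_le_one : ∀ x, t2 x ≤ 1

/-- Probability that AND wins item 1 with bids `a` (AND) and `b` (OR). -/
def q1 (T : TieRule) (a b : Bid) : ℝ :=
  if b.1 < a.1 then 1 else if a.1 = b.1 then T.t1 a.1 else 0

/-- Probability that AND wins item 2 with bids `a` (AND) and `b` (OR). -/
def q2 (T : TieRule) (a b : Bid) : ℝ :=
  if b.2 < a.2 then 1 else if a.2 = b.2 then T.t2 a.2 else 0

/-- Expected utility of the AND player at the pure profile `(a,b)`. -/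
def uAnd (T : TieRule) (a b : Bid) : ℝ :=
  q1 T a b * q2 T a b - a.1 * q1 T a b - a.2 * q2 T a b

/-- Expected utility of the OR player at the pure profile `(a,b)`. -/
def uOr (v : ℝ) (T : TieRule) (a b : Bid) : ℝ :=
  v * (1 - q1 T a b * q2 T a b) - b.1 * (1 - q1 T a b) - b.2 * (1 - q2 T a b)

/-- A mixed strategy: a Borel probability measure on `ℝ × ℝ` supported in the box. -/
def IsMixed (v : ℝ) (μ : Measure Bid) : Prop :=
  IsProbabilityMeasure μ ∧ μ (box v) = 1

/-- Expected utility of AND under mixed strategies. -/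
def UAnd (T : TieRule) (μ ν : Measure Bid) : ℝ :=
  ∫ p, uAnd T p.1 p.2 ∂(μ.prod ν)

/-- Expected utility of OR under mixed strategies. -/
def UOr (v : ℝ) (T : TieRule) (μ ν : Measure Bid) : ℝ :=
  ∫ p, uOr v T p.1 p.2 ∂(μ.prod ν)

/-- `(μ,ν)` is a mixed Nash equilibrium of the AND–OR game. -/
def IsNash (v : ℝ) (T : TieRule) (μ ν : Measure Bid) : Prop :=
  IsMixed v μ ∧ IsMixed v ν ∧
  (∀ a ∈ box v, (∫ b, uAnd T a b ∂ν) ≤ UAnd T μ ν) ∧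
  (∀ b ∈ box v, (∫ a, uOr v T a b ∂μ) ≤ UOr v T μ ν)

/-- The uniform probability measure on `[0,1] ⊆ ℝ`. -/
def P01 : Measure ℝ := volume.restrict (Icc (0:ℝ) 1)

/-- The OR equilibrium strategy `ν*`: bid `(x,0)` or `(0,x)` with probability `1/2` each,
where `x ∈ [0,1/2]` has CDF `x/(1-x)`. -/
def nuStar : Measure Bid :=
  (1/2 : ℝ≥0∞) • Measure.map (fun u => (u/(1+u), (0:ℝ))) P01 +
  (1/2 : ℝ≥0∞) • Measure.map (fun u => ((0:ℝ), u/(1+u))) P01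

/-- Inverse-CDF map for the AND equilibrium bid distribution. -/
def gAnd (v u : ℝ) : ℝ := if 0 < u then max 0 (v - (v - 1/2)/u) else 0

/-- The AND equilibrium strategy `μ*`: bid `(y,y)` where `y ∈ [0,1/2]` has CDF
`(v-1/2)/(v-y)`, with an atom of mass `1 - 1/(2v)` at `0`. -/
def muStar (v : ℝ) : Measure Bid := Measure.map (fun u => (gAnd v u, gAnd v u)) P01


/-! ### Infrastructure -/

/-- AND's winning probability on item 1 as a function of the two scalar bids. -/
def w1 (T : TieRule) (x y : ℝ) : ℝ := if y < x then 1 else if x = y then T.t1 x else 0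

/-- AND's winning probability on item 2 as a function of the two scalar bids. -/
def w2 (T : TieRule) (x y : ℝ) : ℝ := if y < x then 1 else if x = y then T.t2 x else 0

lemma q1_eq (T : TieRule) (a b : Bid) : q1 T a b = w1 T a.1 b.1 := rfl
lemma q2_eq (T : TieRule) (a b : Bid) : q2 T a b = w2 T a.2 b.2 := rfl

lemma w1_nonneg (T : TieRule) (x y : ℝ) : 0 ≤ w1 T x y := by
  unfold w1; split_ifs with h1 h2 <;> simp [T.t1_nonneg]
lemma w1_le_one (T : TieRule) (x y : ℝ) : w1 T x y ≤ 1 := by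
  unfold w1; split_ifs with h1 h2 <;> simp [T.t1_le_one]
lemma w2_nonneg (T : TieRule) (x y : ℝ) : 0 ≤ w2 T x y := by
  unfold w2; split_ifs with h1 h2 <;> simp [T.t2_nonneg]
lemma w2_le_one (T : TieRule) (x y : ℝ) : w2 T x y ≤ 1 := by
  unfold w2; split_ifs with h1 h2 <;> simp [T.t2_le_one]

lemma w1_of_gt (T : TieRule) {x y : ℝ} (h : y < x) : w1 T x y = 1 := by
  unfold w1; rw [if_pos h]
lemma w1_of_lt (T : TieRule) {x y : ℝ} (h : x < y) : w1 T x y = 0 := by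
  unfold w1; rw [if_neg (by linarith), if_neg (by linarith)]
lemma w1_of_eq (T : TieRule) {x y : ℝ} (h : x = y) : w1 T x y = T.t1 x := by
  subst h; unfold w1; rw [if_neg (lt_irrefl x), if_pos rfl]

lemma uAnd_eq (T : TieRule) (a b : Bid) :
    uAnd T a b = w1 T a.1 b.1 * w2 T a.2 b.2 - a.1 * w1 T a.1 b.1 - a.2 * w2 T a.2 b.2 := rfl

lemma uOr_eq (v : ℝ) (T : TieRule) (a b : Bid) :
    uOr v T a b = v * (1 - w1 T a.1 b.1 * w2 T a.2 b.2) - b.1 * (1 - w1 T a.1 b.1)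
      - b.2 * (1 - w2 T a.2 b.2) := rfl

lemma measurable_w1 (T : TieRule) : Measurable (fun p : ℝ × ℝ => w1 T p.1 p.2) := by
  unfold w1
  exact Measurable.ite (measurableSet_lt measurable_snd measurable_fst)
    measurable_const (Measurable.ite (measurableSet_eq_fun measurable_fst measurable_snd)
      (T.meas1.comp measurable_fst) measurable_const)

lemma measurable_w2 (T : TieRule) : Measurable (fun p : ℝ × ℝ => w2 T p.1 p.2) := by
  unfold w2
  exact Measurable.ite (measurableSet_lt measurable_snd measurable_fst)
    measurable_const (Measurable.ite (measurableSet_eq_fun measurable_fst measurable_snd)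
      (T.meas2.comp measurable_fst) measurable_const)

lemma measurable_uAnd (T : TieRule) : Measurable (fun p : Bid × Bid => uAnd T p.1 p.2) := by
  simp only [uAnd_eq]
  apply Measurable.sub; apply Measurable.sub
  · exact ((measurable_w1 T).comp (measurable_fst.fst.prodMk measurable_snd.fst)).mul
      ((measurable_w2 T).comp (measurable_fst.snd.prodMk measurable_snd.snd))
  · exact measurable_fst.fst.mul ((measurable_w1 T).comp (measurable_fst.fst.prodMk measurable_snd.fst))
  · exact measurable_fst.snd.mul ((measurable_w2 T).comp (measurable_fst.snd.prodMk measurable_snd.snd))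

lemma measurable_uOr (v : ℝ) (T : TieRule) :
    Measurable (fun p : Bid × Bid => uOr v T p.1 p.2) := by
  simp only [uOr_eq]
  apply Measurable.sub; apply Measurable.sub
  · exact measurable_const.mul (measurable_const.sub
      (((measurable_w1 T).comp (measurable_fst.fst.prodMk measurable_snd.fst)).mul
        ((measurable_w2 T).comp (measurable_fst.snd.prodMk measurable_snd.snd))))
  · exact measurable_snd.fst.mul (measurable_const.sub
      ((measurable_w1 T).comp (measurable_fst.fst.prodMk measurable_snd.fst)))
  · exact measurable_snd.snd.mul (measurable_const.sub
      ((measurable_w2 T).comp (measurable_fst.snd.prodMk measurable_snd.snd)))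

lemma Hval_pos (v : ℝ) : 0 < Hval v := lt_of_lt_of_le one_pos (le_max_left _ _)
lemma one_le_Hval (v : ℝ) : 1 ≤ Hval v := le_max_left _ _

lemma meas_box (v : ℝ) : MeasurableSet (box v) := measurableSet_Icc.prod measurableSet_Icc

lemma abs_uAnd_le (T : TieRule) (a b : Bid) : |uAnd T a b| ≤ 1 + |a.1| + |a.2| := by
  rw [uAnd_eq, abs_le]
  have h1 := w1_nonneg T a.1 b.1; have h2 := w1_le_one T a.1 b.1
  have h3 := w2_nonneg T a.2 b.2; have h4 := w2_le_one T a.2 b.2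
  have h5 := le_abs_self a.1; have h6 := neg_abs_le a.1
  have h7 := le_abs_self a.2; have h8 := neg_abs_le a.2
  constructor <;> nlinarith

lemma abs_uOr_le (v : ℝ) (T : TieRule) (a b : Bid) :
    |uOr v T a b| ≤ |v| + |b.1| + |b.2| := by
  rw [uOr_eq, abs_le]
  have h1 := w1_nonneg T a.1 b.1; have h2 := w1_le_one T a.1 b.1
  have h3 := w2_nonneg T a.2 b.2; have h4 := w2_le_one T a.2 b.2
  have h5 := le_abs_self b.1; have h6 := neg_abs_le b.1
  have h7 := le_abs_self b.2; have h8 := neg_abs_le b.2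
  have h9 := le_abs_self v; have h10 := neg_abs_le v
  have k1 : 0 ≤ 1 - w1 T a.1 b.1 * w2 T a.2 b.2 := by nlinarith
  have k2 : 1 - w1 T a.1 b.1 * w2 T a.2 b.2 ≤ 1 := by nlinarith
  have p1 : (0:ℝ) ≤ (|v| - v) * (1 - w1 T a.1 b.1 * w2 T a.2 b.2) :=
    mul_nonneg (by linarith) k1
  have p2 : (0:ℝ) ≤ (|v| + v) * (1 - w1 T a.1 b.1 * w2 T a.2 b.2) :=
    mul_nonneg (by linarith) k1
  have p3 : (0:ℝ) ≤ (|b.1| - b.1) * (1 - w1 T a.1 b.1) := mul_nonneg (by linarith) (by linarith)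
  have p4 : (0:ℝ) ≤ (|b.1| + b.1) * (1 - w1 T a.1 b.1) := mul_nonneg (by linarith) (by linarith)
  have p5 : (0:ℝ) ≤ (|b.2| - b.2) * (1 - w2 T a.2 b.2) := mul_nonneg (by linarith) (by linarith)
  have p6 : (0:ℝ) ≤ (|b.2| + b.2) * (1 - w2 T a.2 b.2) := mul_nonneg (by linarith) (by linarith)
  have q1 : |v| * (1 - w1 T a.1 b.1 * w2 T a.2 b.2) ≤ |v| :=
    mul_le_of_le_one_right (abs_nonneg v) k2
  have q3 : |b.1| * (1 - w1 T a.1 b.1) ≤ |b.1| := mul_le_of_le_one_right (abs_nonneg _) (by linarith)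
  have q5 : |b.2| * (1 - w2 T a.2 b.2) ≤ |b.2| := mul_le_of_le_one_right (abs_nonneg _) (by linarith)
  constructor <;> nlinarith

lemma abs_le_of_box {v : ℝ} {a : Bid} (ha : a ∈ box v) : |a.1| ≤ Hval v ∧ |a.2| ≤ Hval v := by
  obtain ⟨⟨h1, h2⟩, h3, h4⟩ := ha
  rw [abs_of_nonneg h1, abs_of_nonneg h3]; exact ⟨h2, h4⟩

lemma exists_of_ae_of_pos {α : Type*} {m : MeasurableSpace α} {μ : Measure α} {P : α → Prop}
    (h : ∀ᵐ a ∂μ, P a) {A : Set α} (hA : 0 < μ A) : ∃ a ∈ A, P a := by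
  by_contra hc; push_neg at hc
  exact absurd (measure_mono_null (fun a ha => hc a ha) (ae_iff.mp h)) hA.ne'

section Nash

variable {v : ℝ} {T : TieRule} {μ ν : Measure Bid}

lemma ae_box_left (h : IsNash v T μ ν) : ∀ᵐ a ∂μ, a ∈ box v := by
  haveI := h.1.1
  rw [ae_iff]
  have : μ (box v)ᶜ = 0 := by
    rw [measure_compl (meas_box v) (measure_ne_top _ _), h.1.2, measure_univ, tsub_self]
  exact this

lemma ae_box_right (h : IsNash v T μ ν) : ∀ᵐ p ∂ν, p ∈ box v := by
  haveI := h.2.1.1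
  rw [ae_iff]
  have : ν (box v)ᶜ = 0 := by
    rw [measure_compl (meas_box v) (measure_ne_top _ _), h.2.1.2, measure_univ, tsub_self]
  exact this

lemma integrable_uAnd_prod (h : IsNash v T μ ν) :
    Integrable (fun p : Bid × Bid => uAnd T p.1 p.2) (μ.prod ν) := by
  haveI := h.1.1; haveI := h.2.1.1
  apply Integrable.mono' (integrable_const (1 + 2 * Hval v))
    (measurable_uAnd T).aestronglyMeasurable
  have hbox : ∀ᵐ p ∂(μ.prod ν), p.1 ∈ box v := by
    rw [ae_iff]
    have : {p : Bid × Bid | ¬ p.1 ∈ box v} = (box v)ᶜ ×ˢ (univ : Set Bid) := by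
      ext p; simp [Set.mem_prod]
    rw [this, Measure.prod_prod]
    have : μ (box v)ᶜ = 0 := by
      rw [measure_compl (meas_box v) (measure_ne_top _ _), h.1.2, measure_univ, tsub_self]
    rw [this, zero_mul]
  filter_upwards [hbox] with p hp
  obtain ⟨e1, e2⟩ := abs_le_of_box hp
  calc ‖uAnd T p.1 p.2‖ ≤ 1 + |p.1.1| + |p.1.2| := abs_uAnd_le T p.1 p.2
    _ ≤ 1 + 2 * Hval v := by linarith

lemma integrable_uOr_prod (h : IsNash v T μ ν) :
    Integrable (fun p : Bid × Bid => uOr v T p.1 p.2) (μ.prod ν) := by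
  haveI := h.1.1; haveI := h.2.1.1
  apply Integrable.mono' (integrable_const (|v| + 2 * Hval v))
    (measurable_uOr v T).aestronglyMeasurable
  have hbox : ∀ᵐ p ∂(μ.prod ν), p.2 ∈ box v := by
    rw [ae_iff]
    have : {p : Bid × Bid | ¬ p.2 ∈ box v} = (univ : Set Bid) ×ˢ (box v)ᶜ := by
      ext p; simp [Set.mem_prod]
    rw [this, Measure.prod_prod]
    have : ν (box v)ᶜ = 0 := by
      rw [measure_compl (meas_box v) (measure_ne_top _ _), h.2.1.2, measure_univ, tsub_self]
    rw [this, mul_zero]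
  filter_upwards [hbox] with p hp
  obtain ⟨e1, e2⟩ := abs_le_of_box hp
  calc ‖uOr v T p.1 p.2‖ ≤ |v| + |p.2.1| + |p.2.2| := abs_uOr_le v T p.1 p.2
    _ ≤ |v| + 2 * Hval v := by linarith

lemma integrable_uAnd_slice (h : IsNash v T μ ν) (a : Bid) :
    Integrable (fun p => uAnd T a p) ν := by
  haveI := h.2.1.1
  apply Integrable.mono' (integrable_const (1 + |a.1| + |a.2|))
  · exact ((measurable_uAnd T).comp (measurable_const.prodMk measurable_id)).aestronglyMeasurable
  · exact ae_of_all _ fun p => abs_uAnd_le T a p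

lemma integrable_uOr_slice (h : IsNash v T μ ν) (p : Bid) :
    Integrable (fun a => uOr v T a p) μ := by
  haveI := h.1.1
  apply Integrable.mono' (integrable_const (|v| + |p.1| + |p.2|))
  · exact ((measurable_uOr v T).comp (measurable_id.prodMk measurable_const)).aestronglyMeasurable
  · exact ae_of_all _ fun a => abs_uOr_le v T a p

lemma nash_and_ae (h : IsNash v T μ ν) :
    ∀ᵐ a ∂μ, a ∈ box v ∧ ∀ a' ∈ box v, (∫ p, uAnd T a' p ∂ν) ≤ ∫ p, uAnd T a p ∂ν := by
  haveI := h.1.1; haveI := h.2.1.1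
  have hA := h.2.2.1
  have hint := integrable_uAnd_prod h
  have hfub : UAnd T μ ν = ∫ a, (∫ p, uAnd T a p ∂ν) ∂μ := MeasureTheory.integral_prod _ hint
  set g : Bid → ℝ := fun a => ∫ p, uAnd T a p ∂ν with hg
  have hg_meas : StronglyMeasurable g :=
    (measurable_uAnd T).stronglyMeasurable.integral_prod_right'
  have hg_int : Integrable g μ := by
    apply Integrable.mono' (integrable_const (1 + 2 * Hval v)) hg_meas.aestronglyMeasurable
    filter_upwards [ae_box_left h] with a ha
    obtain ⟨e1, e2⟩ := abs_le_of_box ha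
    calc ‖g a‖ ≤ (1 + |a.1| + |a.2|) * (ν univ).toReal :=
          norm_integral_le_of_norm_le_const (ae_of_all _ fun p => abs_uAnd_le T a p)
      _ = 1 + |a.1| + |a.2| := by simp [measure_univ]
      _ ≤ 1 + 2 * Hval v := by linarith
  have key : ∀ᵐ a ∂μ, g a = UAnd T μ ν := by
    have h0 : ∫ a, (UAnd T μ ν - g a) ∂μ = 0 := by
      rw [integral_sub (integrable_const _) hg_int, integral_const]
      simp [measure_univ, hfub]
    have hnn : 0 ≤ᵐ[μ] fun a => UAnd T μ ν - g a := by
      filter_upwards [ae_box_left h] with a ha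
      have := hA a ha; simp only [Pi.zero_apply]; linarith
    have := (integral_eq_zero_iff_of_nonneg_ae hnn ((integrable_const _).sub hg_int)).mp h0
    filter_upwards [this] with a ha
    have : UAnd T μ ν - g a = 0 := ha
    linarith
  filter_upwards [ae_box_left h, key] with a ha hk
  exact ⟨ha, fun a' ha' => le_trans (hA a' ha') (le_of_eq hk.symm)⟩

lemma nash_or_ae (h : IsNash v T μ ν) :
    ∀ᵐ p ∂ν, p ∈ box v ∧ ∀ p' ∈ box v, (∫ a, uOr v T a p' ∂μ) ≤ ∫ a, uOr v T a p ∂μ := by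
  haveI := h.1.1; haveI := h.2.1.1
  have hO := h.2.2.2
  have hint := integrable_uOr_prod h
  have hfub : UOr v T μ ν = ∫ p, (∫ a, uOr v T a p ∂μ) ∂ν :=
    MeasureTheory.integral_prod_symm _ hint
  set g : Bid → ℝ := fun p => ∫ a, uOr v T a p ∂μ with hg
  have hg_meas : StronglyMeasurable g :=
    (measurable_uOr v T).stronglyMeasurable.integral_prod_left'
  have hg_int : Integrable g ν := by
    apply Integrable.mono' (integrable_const (|v| + 2 * Hval v)) hg_meas.aestronglyMeasurable
    filter_upwards [ae_box_right h] with p hp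
    obtain ⟨e1, e2⟩ := abs_le_of_box hp
    calc ‖g p‖ ≤ (|v| + |p.1| + |p.2|) * (μ univ).toReal :=
          norm_integral_le_of_norm_le_const (ae_of_all _ fun a => abs_uOr_le v T a p)
      _ = |v| + |p.1| + |p.2| := by simp [measure_univ]
      _ ≤ |v| + 2 * Hval v := by linarith
  have key : ∀ᵐ p ∂ν, g p = UOr v T μ ν := by
    have h0 : ∫ p, (UOr v T μ ν - g p) ∂ν = 0 := by
      rw [integral_sub (integrable_const _) hg_int, integral_const]
      simp [measure_univ, hfub]
    have hnn : 0 ≤ᵐ[ν] fun p => UOr v T μ ν - g p := by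
      filter_upwards [ae_box_right h] with p hp
      have := hO p hp; simp only [Pi.zero_apply]; linarith
    have := (integral_eq_zero_iff_of_nonneg_ae hnn ((integrable_const _).sub hg_int)).mp h0
    filter_upwards [this] with p hp
    have : UOr v T μ ν - g p = 0 := hp
    linarith
  filter_upwards [ae_box_right h, key] with p hp hk
  exact ⟨hp, fun p' hp' => le_trans (hO p' hp') (le_of_eq hk.symm)⟩

end Nash

/-! ### Measurable sets of bids -/

lemma measSle (r : ℝ) : MeasurableSet {p : Bid | p.1 ≤ r} :=
  measurableSet_le measurable_fst measurable_const
lemma measSlt (r : ℝ) : MeasurableSet {p : Bid | p.1 < r} :=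
  measurableSet_lt measurable_fst measurable_const
lemma measSeq (r : ℝ) : MeasurableSet {p : Bid | p.1 = r} :=
  measurableSet_eq_fun measurable_fst measurable_const
lemma measSicc (x y : ℝ) : MeasurableSet {p : Bid | x ≤ p.1 ∧ p.1 ≤ y} := by
  have : {p : Bid | x ≤ p.1 ∧ p.1 ≤ y} = {p : Bid | x ≤ p.1} ∩ {p : Bid | p.1 ≤ y} := rfl
  rw [this]
  exact (measurableSet_le measurable_const measurable_fst).inter (measSle y)
lemma measSioc (x y : ℝ) : MeasurableSet {p : Bid | x < p.1 ∧ p.1 ≤ y} := by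
  have : {p : Bid | x < p.1 ∧ p.1 ≤ y} = {p : Bid | x < p.1} ∩ {p : Bid | p.1 ≤ y} := rfl
  rw [this]
  exact (measurableSet_lt measurable_const measurable_fst).inter (measSle y)

lemma measure_Ioc_zero {κ : Measure Bid} [IsFiniteMeasure κ] {x y : ℝ} (hxy : x ≤ y)
    (heq : κ {p : Bid | p.1 ≤ x} = κ {p : Bid | p.1 ≤ y}) :
    κ {p : Bid | x < p.1 ∧ p.1 ≤ y} = 0 := by
  have hun : κ {p : Bid | p.1 ≤ y} = κ {p : Bid | p.1 ≤ x} + κ {p : Bid | x < p.1 ∧ p.1 ≤ y} := by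
    rw [← measure_union ?_ (measSioc x y)]
    · congr 1
      ext p
      simp only [mem_union, mem_setOf_eq]
      constructor
      · intro hp
        rcases le_or_gt p.1 x with h1 | h1
        · exact Or.inl h1
        · exact Or.inr ⟨h1, hp⟩
      · rintro (h1 | ⟨h1, h2⟩)
        · exact le_trans h1 hxy
        · exact h2
    · rw [Set.disjoint_left]
      intro p hp1 hp2
      exact absurd hp2.1 (not_lt.mpr hp1)
  have h2 : κ {p : Bid | p.1 ≤ x} + 0 = κ {p : Bid | p.1 ≤ x} + κ {p : Bid | x < p.1 ∧ p.1 ≤ y} := by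
    rw [add_zero]; nth_rewrite 1 [heq]; exact hun
  exact ((ENNReal.add_right_inj (measure_ne_top κ _)).mp h2).symm

section Main

variable {v : ℝ} {T : TieRule} {μ ν : Measure Bid}

/-- If OR puts no mass in `(b,D)` on item 1, then no AND best response bids in `(b,D)`
on item 1; hence AND puts no mass there. -/
lemma gapAnd (h : IsNash v T μ ν) {b D : ℝ} (hb : 0 < b)
    (hnull : ν {p : Bid | b < p.1 ∧ p.1 < D} = 0) (hν0 : 0 < ν {p : Bid | p.1 ≤ b}) :
    μ {p : Bid | b < p.1 ∧ p.1 < D} = 0 := by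
  haveI := h.1.1; haveI := h.2.1.1
  apply measure_mono_null _ (ae_iff.mp (nash_and_ae h))
  rintro a ⟨ha1, ha2⟩
  simp only [mem_setOf_eq]
  rintro ⟨habox, hbest⟩
  set e := (b + a.1)/2 with he
  have he1 : b < e := by rw [he]; linarith
  have he2 : e < a.1 := by rw [he]; linarith
  have ha'box : ((e, a.2) : Bid) ∈ box v :=
    ⟨⟨by linarith, le_trans he2.le habox.1.2⟩, habox.2⟩
  have hle := hbest (e, a.2) ha'box
  have hint1 := integrable_uAnd_slice h (e, a.2)
  have hint2 := integrable_uAnd_slice h a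
  have hψint : Integrable ({p : Bid | p.1 ≤ b}.indicator fun _ => a.1 - e) ν :=
    (integrable_const _).indicator (measSle b)
  have hnu : ∀ᵐ p ∂ν, ¬(b < p.1 ∧ p.1 < D) := by
    rw [ae_iff]; simp only [not_not]; exact hnull
  have hψle : ({p : Bid | p.1 ≤ b}.indicator fun _ => a.1 - e) ≤ᵐ[ν]
      fun p => uAnd T (e, a.2) p - uAnd T a p := by
    filter_upwards [hnu] with p hp
    rcases le_or_gt p.1 b with hpb | hpb
    · rw [indicator_of_mem (by exact hpb : p ∈ {p : Bid | p.1 ≤ b})]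
      have w1e : w1 T ((e, a.2) : Bid).1 p.1 = 1 := w1_of_gt T (lt_of_le_of_lt hpb he1)
      have w1a : w1 T a.1 p.1 = 1 := w1_of_gt T (lt_of_le_of_lt hpb (by linarith))
      simp only [uAnd_eq, w1e, w1a]
      ring_nf
      simp
    · have hpD : D ≤ p.1 := by
        by_contra hlt; push_neg at hlt; exact hp ⟨hpb, hlt⟩
      rw [indicator_of_notMem (by simp only [mem_setOf_eq, not_le]; exact hpb)]
      have w1e : w1 T ((e, a.2) : Bid).1 p.1 = 0 := w1_of_lt T (by simp only []; linarith)
      have w1a : w1 T a.1 p.1 = 0 := w1_of_lt T (by linarith)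
      simp only [uAnd_eq, w1e, w1a]
      ring_nf
      norm_num
  have hmono := integral_mono_ae hψint (hint1.sub hint2) hψle
  simp only [Pi.sub_apply] at hmono
  rw [integral_sub hint1 hint2, integral_indicator (measSle b), setIntegral_const, measureReal_def,
    smul_eq_mul] at hmono
  have hpos : 0 < (ν {p : Bid | p.1 ≤ b}).toReal :=
    ENNReal.toReal_pos hν0.ne' (measure_ne_top _ _)
  nlinarith [mul_pos hpos (by linarith : (0:ℝ) < a.1 - e)]

/-- If AND puts no mass in `(b,D)` on item 1, then no OR best response bids in `(b,D)`
on item 1; hence OR puts no mass there. -/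
lemma gapOr (h : IsNash v T μ ν) {b D : ℝ} (hb : 0 < b)
    (hnull : μ {p : Bid | b < p.1 ∧ p.1 < D} = 0) (hμ0 : 0 < μ {p : Bid | p.1 ≤ b}) :
    ν {p : Bid | b < p.1 ∧ p.1 < D} = 0 := by
  haveI := h.1.1; haveI := h.2.1.1
  apply measure_mono_null _ (ae_iff.mp (nash_or_ae h))
  rintro q ⟨hq1, hq2⟩
  simp only [mem_setOf_eq]
  rintro ⟨hqbox, hbest⟩
  set e := (b + q.1)/2 with he
  have he1 : b < e := by rw [he]; linarith
  have he2 : e < q.1 := by rw [he]; linarith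
  have hq'box : ((e, q.2) : Bid) ∈ box v :=
    ⟨⟨by linarith, le_trans he2.le hqbox.1.2⟩, hqbox.2⟩
  have hle := hbest (e, q.2) hq'box
  have hint1 := integrable_uOr_slice h (e, q.2)
  have hint2 := integrable_uOr_slice h q
  have hψint : Integrable ({a : Bid | a.1 ≤ b}.indicator fun _ => q.1 - e) μ :=
    (integrable_const _).indicator (measSle b)
  have hnu : ∀ᵐ a ∂μ, ¬(b < a.1 ∧ a.1 < D) := by
    rw [ae_iff]; simp only [not_not]; exact hnull
  have hψle : ({a : Bid | a.1 ≤ b}.indicator fun _ => q.1 - e) ≤ᵐ[μ]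
      fun a => uOr v T a (e, q.2) - uOr v T a q := by
    filter_upwards [hnu] with a hp
    rcases le_or_gt a.1 b with hab | hab
    · rw [indicator_of_mem (by exact hab : a ∈ {p : Bid | p.1 ≤ b})]
      have w1e : w1 T a.1 ((e, q.2) : Bid).1 = 0 := w1_of_lt T (lt_of_le_of_lt hab he1)
      have w1a : w1 T a.1 q.1 = 0 := w1_of_lt T (lt_of_le_of_lt hab (by linarith))
      simp only [uOr_eq, w1e, w1a]
      ring_nf
      simp
    · have hpD : D ≤ a.1 := by
        by_contra hlt; push_neg at hlt; exact hp ⟨hab, hlt⟩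
      rw [indicator_of_notMem (by simp only [mem_setOf_eq, not_le]; exact hab)]
      have w1e : w1 T a.1 ((e, q.2) : Bid).1 = 1 := w1_of_gt T (by simp only []; linarith)
      have w1a : w1 T a.1 q.1 = 1 := w1_of_gt T (by linarith)
      simp only [uOr_eq, w1e, w1a]
      ring_nf
      norm_num
  have hmono := integral_mono_ae hψint (hint1.sub hint2) hψle
  simp only [Pi.sub_apply] at hmono
  rw [integral_sub hint1 hint2, integral_indicator (measSle b), setIntegral_const, measureReal_def,
    smul_eq_mul] at hmono
  have hpos : 0 < (μ {p : Bid | p.1 ≤ b}).toReal :=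
    ENNReal.toReal_pos hμ0.ne' (measure_ne_top _ _)
  nlinarith [mul_pos hpos (by linarith : (0:ℝ) < q.1 - e)]

end Main

open Filter Topology

lemma measurable_w2_snd (T : TieRule) (x : ℝ) : Measurable (fun p : Bid => w2 T x p.2) :=
  (measurable_w2 T).comp (measurable_const.prodMk measurable_snd)

lemma integrable_w2_snd {κ : Measure Bid} [IsFiniteMeasure κ] (T : TieRule) (x : ℝ) :
    Integrable (fun p : Bid => w2 T x p.2) κ := by
  apply Integrable.mono' (integrable_const 1) (measurable_w2_snd T x).aestronglyMeasurable
  apply ae_of_all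
  intro p
  rw [Real.norm_eq_abs, abs_of_nonneg (w2_nonneg T x p.2)]
  exact w2_le_one T x p.2

lemma integrable_affine_w2 {κ : Measure Bid} [IsFiniteMeasure κ] (T : TieRule) (x r s : ℝ) :
    Integrable (fun p : Bid => r + s * w2 T x p.2) κ :=
  (integrable_const r).add ((integrable_w2_snd T x).const_mul s)

lemma setIntegral_affine_w2 {κ : Measure Bid} [IsFiniteMeasure κ] (T : TieRule) (x r s : ℝ)
    {S : Set Bid} (hS : MeasurableSet S) :
    ∫ p in S, (r + s * w2 T x p.2) ∂κ
      = r * (κ S).toReal + s * ∫ p in S, w2 T x p.2 ∂κ := by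
  rw [integral_add ((integrable_const r).integrableOn)
    (((integrable_w2_snd T x).const_mul s).integrableOn), setIntegral_const, measureReal_def,
    MeasureTheory.integral_const_mul, smul_eq_mul]
  ring

lemma toReal_prob_le_one {κ : Measure Bid} [IsProbabilityMeasure κ] (s : Set Bid) :
    (κ s).toReal ≤ 1 := by
  simpa using ENNReal.toReal_mono ENNReal.one_ne_top (prob_le_one (μ := κ) (s := s))

lemma tendsto_toReal_iInter {κ : Measure Bid} [IsFiniteMeasure κ] {S : ℕ → Set Bid}
    (hm : ∀ n, MeasurableSet (S n)) (ha : Antitone S) :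
    Tendsto (fun n => (κ (S n)).toReal) atTop (𝓝 ((κ (⋂ n, S n)).toReal)) := by
  have h1 := tendsto_measure_iInter_atTop (μ := κ) (fun n => (hm n).nullMeasurableSet) ha
    ⟨0, measure_ne_top κ _⟩
  exact (ENNReal.tendsto_toReal (measure_ne_top κ _)).comp h1

section Tail

variable {v : ℝ} {T : TieRule} {μ ν : Measure Bid}

lemma compl_le_null {κ : Measure Bid} [IsProbabilityMeasure κ] {b : ℝ}
    (h1 : κ {p : Bid | p.1 ≤ b} = 1) : κ {p : Bid | b < p.1 ∧ p.1 < Hval v + 1} = 0 := by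
  have h0 : κ {p : Bid | p.1 ≤ b}ᶜ = 0 := by
    rw [measure_compl (measSle b) (measure_ne_top _ _), h1, measure_univ, tsub_self]
  apply measure_mono_null _ h0
  intro p hp
  simp only [mem_compl_iff, mem_setOf_eq, not_le]
  exact hp.1

lemma all_mass_low {κ : Measure Bid} [IsProbabilityMeasure κ] {b : ℝ}
    (hbox : κ (box v) = 1) (hnull : κ {p : Bid | b < p.1 ∧ p.1 < Hval v + 1} = 0) :
    κ {p : Bid | p.1 ≤ b} = 1 := by
  have hsub : box v ⊆ {p : Bid | p.1 ≤ b} ∪ {p : Bid | b < p.1 ∧ p.1 < Hval v + 1} := by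
    intro p hp
    rcases le_or_gt p.1 b with h1 | h1
    · exact Or.inl h1
    · exact Or.inr ⟨h1, lt_of_le_of_lt hp.1.2 (by linarith)⟩
  have h2 : (1:ℝ≥0∞) ≤ κ {p : Bid | p.1 ≤ b} := by
    calc (1:ℝ≥0∞) = κ (box v) := hbox.symm
      _ ≤ κ ({p : Bid | p.1 ≤ b} ∪ {p : Bid | b < p.1 ∧ p.1 < Hval v + 1}) := measure_mono hsub
      _ ≤ κ {p : Bid | p.1 ≤ b} + κ {p : Bid | b < p.1 ∧ p.1 < Hval v + 1} := measure_union_le _ _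
      _ = κ {p : Bid | p.1 ≤ b} := by rw [hnull, add_zero]
  exact le_antisymm prob_le_one h2

/-- If OR's item-1 bids are a.s. at most `b`, the same holds for AND. -/
lemma tailAnd (h : IsNash v T μ ν) {b : ℝ} (hb : 0 < b)
    (hν1 : ν {p : Bid | p.1 ≤ b} = 1) : μ {p : Bid | p.1 ≤ b} = 1 := by
  haveI := h.1.1; haveI := h.2.1.1
  have hν0 : 0 < ν {p : Bid | p.1 ≤ b} := by rw [hν1]; exact one_pos
  exact all_mass_low h.1.2 (gapAnd h hb (compl_le_null hν1) hν0)

/-- If AND's item-1 bids are a.s. at most `b`, the same holds for OR. -/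
lemma tailOr (h : IsNash v T μ ν) {b : ℝ} (hb : 0 < b)
    (hμ1 : μ {p : Bid | p.1 ≤ b} = 1) : ν {p : Bid | p.1 ≤ b} = 1 := by
  haveI := h.1.1; haveI := h.2.1.1
  have hμ0 : 0 < μ {p : Bid | p.1 ≤ b} := by rw [hμ1]; exact one_pos
  exact all_mass_low h.2.1.2 (gapOr h hb (compl_le_null hμ1) hμ0)

end Tail

section Var1

variable {v : ℝ} {T : TieRule} {μ ν : Measure Bid}

set_option maxHeartbeats 1600000 in
lemma var1 (hv : 1/2 < v) (h : IsNash v T μ ν) {b c : ℝ} (hb : 0 < b) (hbc : b < c)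
    (hgap : ν {p : Bid | p.1 ≤ b} = ν {p : Bid | p.1 ≤ c})
    (hν0 : 0 < ν {p : Bid | p.1 ≤ b}) (hμ0 : 0 < μ {p : Bid | p.1 ≤ b}) :
    ν {p : Bid | p.1 ≤ b} = 1 ∧ μ {p : Bid | p.1 ≤ b} = 1 := by
  haveI := h.1.1; haveI := h.2.1.1
  have hv0 : 0 < v := by linarith
  have hnu1 : ν {p : Bid | p.1 ≤ b} = 1 := by
    by_contra hne
    have hlt1 : ν {p : Bid | p.1 ≤ b} < 1 := lt_of_le_of_ne prob_le_one hne
    set S : Set ℝ := {x : ℝ | b < x ∧ ν {p : Bid | p.1 ≤ b} < ν {p : Bid | p.1 ≤ x}} with hS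
    have hHsub : box v ⊆ {p : Bid | p.1 ≤ Hval v} := fun p hp => hp.1.2
    have hHfull : ν {p : Bid | p.1 ≤ Hval v} = 1 :=
      le_antisymm prob_le_one (h.2.1.2 ▸ measure_mono hHsub)
    have hbH : b < Hval v := by
      by_contra hcon
      push_neg at hcon
      have : ν {p : Bid | p.1 ≤ Hval v} ≤ ν {p : Bid | p.1 ≤ b} :=
        measure_mono (fun p hp => le_trans hp hcon)
      rw [hHfull] at this
      exact absurd (le_antisymm prob_le_one this) hne
    have hHS : Hval v ∈ S := ⟨hbH, by rw [hHfull]; exact hlt1⟩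
    have hSne : S.Nonempty := ⟨Hval v, hHS⟩
    have hSbdd : BddBelow S := ⟨b, fun x hx => hx.1.le⟩
    set d := sInf S with hd
    have hcd : c ≤ d := by
      apply le_csInf hSne
      intro x hx
      by_contra hcon
      push_neg at hcon
      have : ν {p : Bid | p.1 ≤ x} ≤ ν {p : Bid | p.1 ≤ c} :=
        measure_mono (fun p hp => le_trans hp hcon.le)
      rw [← hgap] at this
      exact absurd this (not_le.mpr hx.2)
    have hbd : b < d := lt_of_lt_of_le hbc hcd
    have hdH : d ≤ Hval v := csInf_le hSbdd hHS
    have hflat : ∀ x, b ≤ x → x < d → ν {p : Bid | p.1 ≤ x} = ν {p : Bid | p.1 ≤ b} := by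
      intro x hbx hxd
      refine le_antisymm ?_ (measure_mono (fun p hp => le_trans hp hbx))
      have hxS : x ∉ S := fun hxS => absurd (csInf_le hSbdd hxS) (not_le.mpr hxd)
      rcases eq_or_lt_of_le hbx with rfl | hbx'
      · exact le_refl _
      · by_contra hcon
        push_neg at hcon
        exact hxS ⟨hbx', hcon⟩
    have hmidν : ν {p : Bid | b < p.1 ∧ p.1 < d} = 0 := by
      have hsub : {p : Bid | b < p.1 ∧ p.1 < d} ⊆
          ⋃ n : ℕ, {p : Bid | b < p.1 ∧ p.1 ≤ d - (d - b)/(n+1)} := by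
        intro p hp
        obtain ⟨n, hn⟩ := exists_nat_gt ((d - b)/(d - p.1))
        have hdp : 0 < d - p.1 := by linarith [hp.2]
        have hn1 : (d - b)/(d - p.1) < (n:ℝ) + 1 := by linarith
        have hkey : (d - b)/((n:ℝ)+1) < d - p.1 := by
          rw [div_lt_iff₀ (by positivity)] at hn1 ⊢
          linarith
        exact mem_iUnion.mpr ⟨n, hp.1, by linarith⟩
      apply measure_mono_null hsub
      apply measure_iUnion_null
      intro n
      set x := d - (d - b)/((n:ℝ)+1) with hx
      have hx1 : b ≤ x := by
        rw [hx]
        have hnn : (0:ℝ) ≤ (n:ℝ) := by positivity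
        have : (d - b)/((n:ℝ)+1) ≤ d - b := by
          rw [div_le_iff₀ (by positivity)]
          nlinarith
        linarith
      have hx2 : x < d := by
        rw [hx]
        have : 0 < (d - b)/((n:ℝ)+1) := div_pos (by linarith) (by positivity)
        linarith
      exact measure_Ioc_zero hx1 ((hflat x hx1 hx2).symm)
    have hmidμ : μ {p : Bid | b < p.1 ∧ p.1 < d} = 0 := gapAnd h hb hmidν hν0
    have hnear : ∀ x, d < x → 0 < ν {p : Bid | d ≤ p.1 ∧ p.1 ≤ x} := by
      intro x hx
      obtain ⟨y, hyS, hyx⟩ := (csInf_lt_iff hSbdd hSne).mp hx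
      have hdy : d ≤ y := csInf_le hSbdd hyS
      have hposmid : 0 < ν {p : Bid | b < p.1 ∧ p.1 ≤ y} := by
        rw [pos_iff_ne_zero]
        intro h0
        have hsub2 : {p : Bid | p.1 ≤ y} ⊆
            {p : Bid | p.1 ≤ b} ∪ {p : Bid | b < p.1 ∧ p.1 ≤ y} := by
          intro p hp
          rcases le_or_gt p.1 b with h1 | h1
          · exact Or.inl h1
          · exact Or.inr ⟨h1, hp⟩
        have := (measure_mono hsub2).trans (measure_union_le (μ := ν) _ _)
        rw [h0, add_zero] at this
        exact absurd this (not_le.mpr hyS.2)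
      have hsub3 : {p : Bid | b < p.1 ∧ p.1 ≤ y} ⊆
          {p : Bid | b < p.1 ∧ p.1 < d} ∪ {p : Bid | d ≤ p.1 ∧ p.1 ≤ x} := by
        intro p hp
        rcases lt_or_ge p.1 d with h1 | h1
        · exact Or.inl ⟨hp.1, h1⟩
        · exact Or.inr ⟨h1, le_trans hp.2 hyx.le⟩
      have := (measure_mono hsub3).trans (measure_union_le (μ := ν) _ _)
      rw [hmidν, zero_add] at this
      exact lt_of_lt_of_le hposmid this
    set Fb := (ν {p : Bid | p.1 ≤ b}).toReal with hFbdef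
    set Gb := (μ {p : Bid | p.1 ≤ b}).toReal with hGbdef
    have hFb : 0 < Fb := ENNReal.toReal_pos hν0.ne' (measure_ne_top _ _)
    have hGb : 0 < Gb := ENNReal.toReal_pos hμ0.ne' (measure_ne_top _ _)
    set e := (b + d)/2 with he
    have he1 : b < e := by rw [he]; linarith
    have he2 : e < d := by rw [he]; linarith
    have he0 : 0 < e := by linarith
    have heH : e ≤ Hval v := by linarith
    have hmidν_ae : ∀ᵐ p ∂ν, ¬(b < p.1 ∧ p.1 < d) := by
      rw [ae_iff]; simp only [not_not]; exact hmidν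
    have hmidμ_ae : ∀ᵐ a ∂μ, ¬(b < a.1 ∧ a.1 < d) := by
      rw [ae_iff]; simp only [not_not]; exact hmidμ
    -- Step E: AND has an atom at d
    have hatomμ : 0 < μ {p : Bid | p.1 = d} := by
      have key : ∀ n : ℕ, (d - e) * Gb ≤
          v * (μ {p : Bid | d ≤ p.1 ∧ p.1 ≤ d + 1/((n:ℝ)+1)}).toReal := by
        intro n
        set x := d + 1/((n:ℝ)+1) with hxdef
        have hdx : d < x := by
          rw [hxdef]; have : (0:ℝ) < 1/((n:ℝ)+1) := by positivity
          linarith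
        obtain ⟨q, hqmem, hqbox, hqbest⟩ : ∃ q : Bid, (d ≤ q.1 ∧ q.1 ≤ x) ∧ q ∈ box v ∧
            ∀ q' ∈ box v, (∫ a, uOr v T a q' ∂μ) ≤ ∫ a, uOr v T a q ∂μ := by
          obtain ⟨q, hq1, hq2, hq3⟩ := exists_of_ae_of_pos (nash_or_ae h) (hnear x hdx)
          exact ⟨q, hq1, hq2, hq3⟩
        have hq'box : ((e, q.2) : Bid) ∈ box v := ⟨⟨he0.le, heH⟩, hqbox.2⟩
        have hle := hqbest (e, q.2) hq'box
        have hint1 := integrable_uOr_slice h (e, q.2)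
        have hint2 := integrable_uOr_slice h q
        have hψ1 : Integrable ({a : Bid | a.1 ≤ b}.indicator fun _ => d - e) μ :=
          (integrable_const _).indicator (measSle b)
        have hψ2 : Integrable ({a : Bid | d ≤ a.1 ∧ a.1 ≤ x}.indicator fun _ => -v) μ :=
          (integrable_const _).indicator (measSicc d x)
        have hψle : (({a : Bid | a.1 ≤ b}.indicator fun _ => d - e) +
            ({a : Bid | d ≤ a.1 ∧ a.1 ≤ x}.indicator fun _ => -v)) ≤ᵐ[μ]
            fun a => uOr v T a (e, q.2) - uOr v T a q := by
          filter_upwards [hmidμ_ae] with a ha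
          simp only [Pi.add_apply]
          rcases le_or_gt a.1 b with h1 | h1
          · rw [indicator_of_mem (by exact h1 : a ∈ {p : Bid | p.1 ≤ b}),
              indicator_of_notMem (by
                simp only [mem_setOf_eq, not_and, not_le]
                intro hda; linarith)]
            have w1e : w1 T a.1 ((e, q.2) : Bid).1 = 0 := w1_of_lt T (lt_of_le_of_lt h1 he1)
            have w1q : w1 T a.1 q.1 = 0 := w1_of_lt T (by linarith [hqmem.1])
            simp only [uOr_eq, w1e, w1q]
            have := hqmem.1
            ring_nf
            linarith
          · have had : d ≤ a.1 := by
              by_contra hcon; push_neg at hcon; exact ha ⟨h1, hcon⟩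
            rw [indicator_of_notMem (by simp only [mem_setOf_eq, not_le]; exact h1)]
            rcases le_or_gt a.1 x with h2 | h2
            · rw [indicator_of_mem (by exact ⟨had, h2⟩ :
                  a ∈ {p : Bid | d ≤ p.1 ∧ p.1 ≤ x})]
              have w1e : w1 T a.1 ((e, q.2) : Bid).1 = 1 := w1_of_gt T (by
                show e < a.1; linarith)
              have hW0 := w1_nonneg T a.1 q.1
              have hW1 := w1_le_one T a.1 q.1
              have hw0 := w2_nonneg T a.2 q.2
              have hw1 := w2_le_one T a.2 q.2
              have hq0 : (0:ℝ) ≤ q.1 := hqbox.1.1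
              have hkey : 0 ≤ 1 - w2 T a.2 q.2 * (1 - w1 T a.1 q.1) := by nlinarith
              simp only [uOr_eq, w1e]
              nlinarith [mul_nonneg hv0.le hkey, mul_nonneg hq0 (sub_nonneg.mpr hW1)]
            · rw [indicator_of_notMem (by
                simp only [mem_setOf_eq, not_and, not_le]
                intro _; exact h2)]
              have w1e : w1 T a.1 ((e, q.2) : Bid).1 = 1 := w1_of_gt T (by
                show e < a.1; linarith)
              have w1q : w1 T a.1 q.1 = 1 := w1_of_gt T (by linarith [hqmem.2])
              simp only [uOr_eq, w1e, w1q]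
              ring_nf
              exact le_refl _
        have hmono := integral_mono_ae (hψ1.add hψ2) (hint1.sub hint2) hψle
        simp only [Pi.sub_apply, Pi.add_apply] at hmono
        rw [integral_sub hint1 hint2, integral_add hψ1 hψ2,
          integral_indicator (measSle b), setIntegral_const, measureReal_def,
          integral_indicator (measSicc d x), setIntegral_const, measureReal_def, smul_eq_mul,
          smul_eq_mul, ← hGbdef] at hmono
        linarith [hmono, hle]
      set Sn : ℕ → Set Bid := fun n => {p : Bid | d ≤ p.1 ∧ p.1 ≤ d + 1/((n:ℝ)+1)} with hSn
      have hmeas : ∀ n, MeasurableSet (Sn n) := fun n => measSicc _ _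
      have hanti : Antitone Sn := by
        intro n m hnm p hp
        refine ⟨hp.1, le_trans hp.2 ?_⟩
        have h1 : (1:ℝ)/((m:ℝ)+1) ≤ 1/((n:ℝ)+1) := by
          apply one_div_le_one_div_of_le (by positivity)
          have : (n:ℝ) ≤ (m:ℝ) := Nat.cast_le.mpr hnm
          linarith
        linarith
      have hiInter : (⋂ n, Sn n) = {p : Bid | p.1 = d} := by
        ext p
        simp only [mem_iInter, hSn, mem_setOf_eq]
        constructor
        · intro hall
          have h1 : d ≤ p.1 := (hall 0).1
          by_contra hne'
          have h2' : d < p.1 := lt_of_le_of_ne h1 (Ne.symm hne')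
          obtain ⟨n, hn⟩ := exists_nat_one_div_lt (show (0:ℝ) < p.1 - d by linarith)
          have := (hall n).2
          linarith
        · intro hp n
          refine ⟨le_of_eq hp.symm, ?_⟩
          rw [hp]
          have : (0:ℝ) < 1/((n:ℝ)+1) := by positivity
          linarith
      have htend := tendsto_toReal_iInter (κ := μ) hmeas hanti
      rw [hiInter] at htend
      have hge : (d - e) * Gb ≤ v * (μ {p : Bid | p.1 = d}).toReal :=
        ge_of_tendsto' (htend.const_mul v) key
      rw [pos_iff_ne_zero]
      intro h0
      rw [h0] at hge
      simp only [ENNReal.toReal_zero, mul_zero] at hge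
      exact absurd hge (not_le.mpr (mul_pos (by linarith) hGb))
    -- Steps G & H: analysis at AND's atom
    obtain ⟨astar, hamem, habox, habest⟩ : ∃ a : Bid, a.1 = d ∧ a ∈ box v ∧
        ∀ a' ∈ box v, (∫ p, uAnd T a' p ∂ν) ≤ ∫ p, uAnd T a p ∂ν := by
      obtain ⟨a, ha1, ha2, ha3⟩ := exists_of_ae_of_pos (nash_and_ae h) hatomμ
      exact ⟨a, ha1, ha2, ha3⟩
    set αr := (ν {p : Bid | p.1 = d}).toReal with hαr
    set I1 := ∫ p in {p : Bid | p.1 = d}, w2 T astar.2 p.2 ∂ν with hI1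
    set L := d * αr - I1 with hL
    set tt := T.t1 d with htt
    have htt0 : 0 ≤ tt := T.t1_nonneg d
    have htt1' : tt ≤ 1 := T.t1_le_one d
    have hI1nn : 0 ≤ I1 := setIntegral_nonneg (measSeq d) (fun p _ => w2_nonneg T astar.2 p.2)
    have hI1le : I1 ≤ αr := by
      have := integral_mono (μ := ν.restrict {p : Bid | p.1 = d})
        (integrable_w2_snd T astar.2).integrableOn (integrable_const 1).integrableOn
        (fun p => w2_le_one T astar.2 p.2)
      rwa [setIntegral_const, measureReal_def, smul_eq_mul, mul_one] at this
    have hαnn : 0 ≤ αr := ENNReal.toReal_nonneg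
    -- Step G: down-deviation from the atom
    have hstepG : (d - e) * Fb + tt * L ≤ 0 := by
      have ha'box : ((e, astar.2) : Bid) ∈ box v := ⟨⟨he0.le, heH⟩, habox.2⟩
      have hle := habest (e, astar.2) ha'box
      have hint1 := integrable_uAnd_slice h (e, astar.2)
      have hint2 := integrable_uAnd_slice h astar
      have hψ1 : Integrable ({p : Bid | p.1 ≤ b}.indicator fun _ => d - e) ν :=
        (integrable_const _).indicator (measSle b)
      have hψ2 : Integrable ({p : Bid | p.1 = d}.indicator
          fun p => tt * d + (-tt) * w2 T astar.2 p.2) ν :=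
        (integrable_affine_w2 T astar.2 (tt*d) (-tt)).indicator (measSeq d)
      have hψle : (({p : Bid | p.1 ≤ b}.indicator fun _ => d - e) +
          ({p : Bid | p.1 = d}.indicator fun p => tt * d + (-tt) * w2 T astar.2 p.2)) ≤ᵐ[ν]
          fun p => uAnd T (e, astar.2) p - uAnd T astar p := by
        filter_upwards [hmidν_ae] with p hp
        simp only [Pi.add_apply]
        rcases le_or_gt p.1 b with h1 | h1
        · rw [indicator_of_mem (by exact h1 : p ∈ {p : Bid | p.1 ≤ b}),
            indicator_of_notMem (by
              simp only [mem_setOf_eq]; intro heq; rw [heq] at h1; linarith)]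
          have w1e : w1 T ((e, astar.2) : Bid).1 p.1 = 1 := w1_of_gt T (lt_of_le_of_lt h1 he1)
          have w1a : w1 T d p.1 = 1 := w1_of_gt T (by linarith)
          simp only [uAnd_eq, hamem, w1e, w1a]
          ring_nf
          exact le_refl _
        · have hpd : d ≤ p.1 := by
            by_contra hcon; push_neg at hcon; exact hp ⟨h1, hcon⟩
          rw [indicator_of_notMem (by simp only [mem_setOf_eq, not_le]; exact h1)]
          rcases eq_or_lt_of_le hpd with heq | hlt
          · rw [indicator_of_mem (by exact heq.symm : p ∈ {p : Bid | p.1 = d})]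
            have w1e : w1 T ((e, astar.2) : Bid).1 p.1 = 0 := w1_of_lt T (by
              show e < p.1; linarith)
            have w1a : w1 T d p.1 = T.t1 d := w1_of_eq T heq
            simp only [uAnd_eq, hamem, w1e, w1a, ← htt]
            ring_nf
            exact le_refl _
          · rw [indicator_of_notMem (by
              simp only [mem_setOf_eq]; intro heq; rw [heq] at hlt; exact lt_irrefl d hlt)]
            have w1e : w1 T ((e, astar.2) : Bid).1 p.1 = 0 := w1_of_lt T (by
              show e < p.1; linarith)
            have w1a : w1 T d p.1 = 0 := w1_of_lt T hlt
            simp only [uAnd_eq, hamem, w1e, w1a]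
            ring_nf
            exact le_refl _
      have hmono := integral_mono_ae (hψ1.add hψ2) (hint1.sub hint2) hψle
      simp only [Pi.sub_apply, Pi.add_apply] at hmono
      rw [integral_sub hint1 hint2, integral_add hψ1 hψ2,
        integral_indicator (measSle b), setIntegral_const, measureReal_def,
        integral_indicator (measSeq d),
        setIntegral_affine_w2 T astar.2 (tt*d) (-tt) (measSeq d),
        smul_eq_mul, ← hFbdef, ← hαr, ← hI1] at hmono
      have hLL : tt * L = tt * d * αr + (-tt) * I1 := by rw [hL]; ring
      linarith [hmono, hle]
    have hLneg : L < 0 := by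
      rcases lt_or_ge L 0 with h1 | h1
      · exact h1
      · nlinarith [mul_nonneg htt0 h1]
    have hd1 : d < 1 := by
      by_contra hcon
      push_neg at hcon
      nlinarith
    have hα_pos : 0 < ν {p : Bid | p.1 = d} := by
      rw [pos_iff_ne_zero]
      intro h0
      have hα0 : αr = 0 := by rw [hαr, h0]; simp
      have hI0 : I1 = 0 := by
        rw [hI1, Measure.restrict_eq_zero.mpr h0, integral_zero_measure]
      rw [hL, hα0, hI0] at hLneg
      simp at hLneg
    -- Step H: up-deviation from the atom forces t1 d = 1
    have htt_eq : tt = 1 := by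
      have hkeyH : ∀ n : ℕ, (1 - tt) * (I1 - d * αr) ≤ 2 * min (1/((n:ℝ)+1)) (1 - d)
          + 2 * (ν {p : Bid | d < p.1 ∧ p.1 ≤ d + min (1/((n:ℝ)+1)) (1 - d)}).toReal := by
        intro n
        set ε := min (1/((n:ℝ)+1)) (1 - d) with hεdef
        have hε0 : 0 < ε := lt_min (by positivity) (by linarith)
        have hε1 : ε ≤ 1 - d := min_le_right _ _
        have ha'box : ((d + ε, astar.2) : Bid) ∈ box v := by
          refine ⟨⟨?_, ?_⟩, habox.2⟩
          · show (0:ℝ) ≤ d + ε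
            linarith
          · show d + ε ≤ Hval v
            have h2 : d + ε ≤ 1 := by linarith
            linarith [one_le_Hval v]
        have hle := habest (d + ε, astar.2) ha'box
        have hint1 := integrable_uAnd_slice h (d + ε, astar.2)
        have hint2 := integrable_uAnd_slice h astar
        have hψ1 : Integrable ({p : Bid | p.1 < d}.indicator fun _ => -ε) ν :=
          (integrable_const _).indicator (measSlt d)
        have hψ2 : Integrable ({p : Bid | p.1 = d}.indicator
            fun p => ((1-tt) * (-d) - ε) + (1-tt) * w2 T astar.2 p.2) ν :=
          (integrable_affine_w2 T astar.2 ((1-tt) * (-d) - ε) (1-tt)).indicator (measSeq d)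
        have hψ3 : Integrable ({p : Bid | d < p.1 ∧ p.1 ≤ d + ε}.indicator fun _ => (-2:ℝ)) ν :=
          (integrable_const _).indicator (measSioc d (d+ε))
        have hψle : (({p : Bid | p.1 < d}.indicator fun _ => -ε) +
            ({p : Bid | p.1 = d}.indicator
              fun p => ((1-tt) * (-d) - ε) + (1-tt) * w2 T astar.2 p.2) +
            ({p : Bid | d < p.1 ∧ p.1 ≤ d + ε}.indicator fun _ => (-2:ℝ))) ≤ᵐ[ν]
            fun p => uAnd T (d + ε, astar.2) p - uAnd T astar p := by
          apply ae_of_all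
          intro p
          simp only [Pi.add_apply]
          rcases lt_trichotomy p.1 d with h1 | h1 | h1
          · rw [indicator_of_mem (by exact h1 : p ∈ {p : Bid | p.1 < d}),
              indicator_of_notMem (by
                simp only [mem_setOf_eq]; intro heq; rw [heq] at h1; exact lt_irrefl d h1),
              indicator_of_notMem (by
                simp only [mem_setOf_eq, not_and, not_le]; intro hda; linarith)]
            have w1u : w1 T ((d + ε, astar.2) : Bid).1 p.1 = 1 := w1_of_gt T (by
              show p.1 < d + ε; linarith)
            have w1a : w1 T d p.1 = 1 := w1_of_gt T h1
            simp only [uAnd_eq, hamem, w1u, w1a]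
            ring_nf
            exact le_refl _
          · rw [indicator_of_notMem (by
                simp only [mem_setOf_eq, not_lt]; exact le_of_eq h1.symm),
              indicator_of_mem (by exact h1 : p ∈ {p : Bid | p.1 = d}),
              indicator_of_notMem (by
                simp only [mem_setOf_eq, not_and, not_le]; intro hda; rw [h1] at hda;
                exact absurd hda (lt_irrefl d))]
            have w1u : w1 T ((d + ε, astar.2) : Bid).1 p.1 = 1 := w1_of_gt T (by
              show p.1 < d + ε; rw [h1]; linarith)
            have w1a : w1 T d p.1 = T.t1 d := w1_of_eq T h1.symm
            simp only [uAnd_eq, hamem, w1u, w1a, ← htt]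
            ring_nf
            exact le_refl _
          · rw [indicator_of_notMem (by
                simp only [mem_setOf_eq, not_lt]; exact h1.le),
              indicator_of_notMem (by
                simp only [mem_setOf_eq]; intro heq; rw [heq] at h1; exact lt_irrefl d h1)]
            have w1a : w1 T d p.1 = 0 := w1_of_lt T h1
            rcases le_or_gt p.1 (d + ε) with h2 | h2
            · rw [indicator_of_mem (by exact ⟨h1, h2⟩ :
                  p ∈ {p : Bid | d < p.1 ∧ p.1 ≤ d + ε})]
              have hW0 := w1_nonneg T (d + ε) p.1
              have hW1 := w1_le_one T (d + ε) p.1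
              have hw0 := w2_nonneg T astar.2 p.2
              have hw1 := w2_le_one T astar.2 p.2
              simp only [uAnd_eq, hamem, w1a]
              have hprod : w1 T (d+ε) p.1 * (w2 T astar.2 p.2 - (d + ε)) ≥ -2 := by
                nlinarith
              nlinarith [hprod]
            · rw [indicator_of_notMem (by
                simp only [mem_setOf_eq, not_and, not_le]; intro _; exact h2)]
              have w1u : w1 T ((d + ε, astar.2) : Bid).1 p.1 = 0 := w1_of_lt T (by
                show d + ε < p.1; exact h2)
              simp only [uAnd_eq, hamem, w1u, w1a]
              ring_nf
              exact le_refl _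
        have hmono := integral_mono_ae ((hψ1.add hψ2).add hψ3) (hint1.sub hint2) hψle
        simp only [Pi.sub_apply, Pi.add_apply] at hmono
        have h12 : Integrable (fun p : Bid => ({p : Bid | p.1 < d}.indicator fun _ => -ε) p
            + ({p : Bid | p.1 = d}.indicator
              fun p => ((1-tt) * (-d) - ε) + (1-tt) * w2 T astar.2 p.2) p) ν := hψ1.add hψ2
        rw [integral_sub hint1 hint2, integral_add h12 hψ3, integral_add hψ1 hψ2,
          integral_indicator (measSlt d), setIntegral_const, measureReal_def,
          integral_indicator (measSeq d),
          setIntegral_affine_w2 T astar.2 ((1-tt) * (-d) - ε) (1-tt) (measSeq d),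
          integral_indicator (measSioc d (d+ε)), setIntegral_const, measureReal_def,
          smul_eq_mul, smul_eq_mul, ← hαr, ← hI1] at hmono
        have hP1 : (ν {p : Bid | p.1 < d}).toReal ≤ 1 := toReal_prob_le_one _
        have hP0 : 0 ≤ (ν {p : Bid | p.1 < d}).toReal := ENNReal.toReal_nonneg
        have hQ0 : 0 ≤ (ν {p : Bid | d < p.1 ∧ p.1 ≤ d + ε}).toReal := ENNReal.toReal_nonneg
        have hα1 : αr ≤ 1 := toReal_prob_le_one _
        nlinarith [hmono, hle, mul_le_of_le_one_right hε0.le hP1,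
          mul_le_of_le_one_right hε0.le hα1]
      have htendε : Tendsto (fun n : ℕ => min (1/((n:ℝ)+1)) (1 - d)) atTop (𝓝 0) := by
        apply squeeze_zero (fun n => le_of_lt (lt_min (by positivity) (by linarith)))
          (fun n => min_le_left _ _)
        exact tendsto_one_div_add_atTop_nhds_zero_nat
      set Tn : ℕ → Set Bid :=
        fun n => {p : Bid | d < p.1 ∧ p.1 ≤ d + min (1/((n:ℝ)+1)) (1 - d)} with hTn
      have hmeasT : ∀ n, MeasurableSet (Tn n) := fun n => measSioc _ _
      have hantiT : Antitone Tn := by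
        intro n m hnm p hp
        refine ⟨hp.1, le_trans hp.2 ?_⟩
        have h1 : (1:ℝ)/((m:ℝ)+1) ≤ 1/((n:ℝ)+1) := by
          apply one_div_le_one_div_of_le (by positivity)
          have : (n:ℝ) ≤ (m:ℝ) := Nat.cast_le.mpr hnm
          linarith
        have := min_le_min h1 (le_refl (1 - d))
        linarith
      have hiT : (⋂ n, Tn n) = (∅ : Set Bid) := by
        ext p
        simp only [mem_iInter, hTn, mem_setOf_eq, mem_empty_iff_false, iff_false, not_forall]
        by_contra hcon
        push_neg at hcon
        obtain ⟨n, hn⟩ := exists_nat_one_div_lt (show (0:ℝ) < p.1 - d from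
          sub_pos.mpr (hcon 0).1)
        have h2 := (hcon n).2
        have h3 : min (1/((n:ℝ)+1)) (1 - d) ≤ 1/((n:ℝ)+1) := min_le_left _ _
        linarith
      have htendT := tendsto_toReal_iInter (κ := ν) hmeasT hantiT
      rw [hiT, measure_empty] at htendT
      simp only [ENNReal.toReal_zero] at htendT
      have hrn : Tendsto (fun n : ℕ => 2 * min (1/((n:ℝ)+1)) (1 - d)
          + 2 * (ν (Tn n)).toReal) atTop (𝓝 0) := by
        have := (htendε.const_mul 2).add (htendT.const_mul 2)
        simpa using this
      have hfin : (1 - tt) * (I1 - d * αr) ≤ 0 := ge_of_tendsto' hrn hkeyH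
      by_contra htc
      have htlt : tt < 1 := lt_of_le_of_ne htt1' htc
      have hpos2 : 0 < I1 - d * αr := by rw [hL] at hLneg; linarith
      nlinarith [mul_pos (sub_pos.mpr htlt) hpos2]
    -- Step J: OR's down-deviation from its atom at d: contradiction
    obtain ⟨qstar, hqd, hqbox, hqbest⟩ : ∃ q : Bid, q.1 = d ∧ q ∈ box v ∧
        ∀ q' ∈ box v, (∫ a, uOr v T a q' ∂μ) ≤ ∫ a, uOr v T a q ∂μ := by
      obtain ⟨q, hq1, hq2, hq3⟩ := exists_of_ae_of_pos (nash_or_ae h) hα_pos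
      exact ⟨q, hq1, hq2, hq3⟩
    have hq'box : ((e, qstar.2) : Bid) ∈ box v := ⟨⟨he0.le, heH⟩, hqbox.2⟩
    have hle := hqbest (e, qstar.2) hq'box
    have hint1 := integrable_uOr_slice h (e, qstar.2)
    have hint2 := integrable_uOr_slice h qstar
    have hψint : Integrable ({a : Bid | a.1 ≤ b}.indicator fun _ => d - e) μ :=
      (integrable_const _).indicator (measSle b)
    have hψle : ({a : Bid | a.1 ≤ b}.indicator fun _ => d - e) ≤ᵐ[μ]
        fun a => uOr v T a (e, qstar.2) - uOr v T a qstar := by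
      filter_upwards [hmidμ_ae] with a ha
      rcases le_or_gt a.1 b with h1 | h1
      · rw [indicator_of_mem (by exact h1 : a ∈ {p : Bid | p.1 ≤ b})]
        have w1e : w1 T a.1 ((e, qstar.2) : Bid).1 = 0 := w1_of_lt T (lt_of_le_of_lt h1 he1)
        have w1d : w1 T a.1 d = 0 := w1_of_lt T (by linarith)
        simp only [uOr_eq, hqd, w1e, w1d]
        ring_nf
        exact le_refl _
      · have had : d ≤ a.1 := by
          by_contra hcon; push_neg at hcon; exact ha ⟨h1, hcon⟩
        rw [indicator_of_notMem (by simp only [mem_setOf_eq, not_le]; exact h1)]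
        have w1e : w1 T a.1 ((e, qstar.2) : Bid).1 = 1 := w1_of_gt T (by
          show e < a.1; linarith)
        have w1d : w1 T a.1 d = 1 := by
          rcases eq_or_lt_of_le had with heq | hlt
          · rw [← heq, w1_of_eq T rfl, ← htt, htt_eq]
          · exact w1_of_gt T hlt
        simp only [uOr_eq, hqd, w1e, w1d]
        ring_nf
        exact le_refl _
    have hmono := integral_mono_ae hψint (hint1.sub hint2) hψle
    simp only [Pi.sub_apply] at hmono
    rw [integral_sub hint1 hint2, integral_indicator (measSle b), setIntegral_const, measureReal_def,
      smul_eq_mul] at hmono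
    nlinarith [mul_pos hGb (by linarith : (0:ℝ) < d - e)]
  exact ⟨hnu1, tailAnd h hb hnu1⟩

end Var1

section Var2

lemma measurable_w2_fst (T : TieRule) (y : ℝ) : Measurable (fun p : Bid => w2 T p.2 y) :=
  (measurable_w2 T).comp (measurable_snd.prodMk measurable_const)

lemma integrable_w2_fst {κ : Measure Bid} [IsFiniteMeasure κ] (T : TieRule) (y : ℝ) :
    Integrable (fun p : Bid => w2 T p.2 y) κ := by
  apply Integrable.mono' (integrable_const 1) (measurable_w2_fst T y).aestronglyMeasurable
  apply ae_of_all
  intro p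
  rw [Real.norm_eq_abs, abs_of_nonneg (w2_nonneg T p.2 y)]
  exact w2_le_one T p.2 y

lemma integrable_affine_w2' {κ : Measure Bid} [IsFiniteMeasure κ] (T : TieRule) (y r s : ℝ) :
    Integrable (fun p : Bid => r + s * w2 T p.2 y) κ :=
  (integrable_const r).add ((integrable_w2_fst T y).const_mul s)

lemma setIntegral_affine_w2' {κ : Measure Bid} [IsFiniteMeasure κ] (T : TieRule) (y r s : ℝ)
    {S : Set Bid} (hS : MeasurableSet S) :
    ∫ p in S, (r + s * w2 T p.2 y) ∂κ
      = r * (κ S).toReal + s * ∫ p in S, w2 T p.2 y ∂κ := by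
  rw [integral_add ((integrable_const r).integrableOn)
    (((integrable_w2_fst T y).const_mul s).integrableOn), setIntegral_const, measureReal_def,
    MeasureTheory.integral_const_mul, smul_eq_mul]
  ring

end Var2

section Var2Main

variable {v : ℝ} {T : TieRule} {μ ν : Measure Bid}

set_option maxHeartbeats 1600000 in
lemma var2 (hv : 1/2 < v) (h : IsNash v T μ ν) {b c : ℝ} (hb : 0 < b) (hbc : b < c)
    (hgap : μ {p : Bid | p.1 ≤ b} = μ {p : Bid | p.1 ≤ c})
    (hμ0 : 0 < μ {p : Bid | p.1 ≤ b}) (hν0 : 0 < ν {p : Bid | p.1 ≤ b}) :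
    μ {p : Bid | p.1 ≤ b} = 1 ∧ ν {p : Bid | p.1 ≤ b} = 1 := by
  haveI := h.1.1; haveI := h.2.1.1
  have hv0 : 0 < v := by linarith
  have hmu1 : μ {p : Bid | p.1 ≤ b} = 1 := by
    by_contra hne
    have hlt1 : μ {p : Bid | p.1 ≤ b} < 1 := lt_of_le_of_ne prob_le_one hne
    set S : Set ℝ := {x : ℝ | b < x ∧ μ {p : Bid | p.1 ≤ b} < μ {p : Bid | p.1 ≤ x}} with hS
    have hHsub : box v ⊆ {p : Bid | p.1 ≤ Hval v} := fun p hp => hp.1.2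
    have hHfull : μ {p : Bid | p.1 ≤ Hval v} = 1 :=
      le_antisymm prob_le_one (h.1.2 ▸ measure_mono hHsub)
    have hbH : b < Hval v := by
      by_contra hcon
      push_neg at hcon
      have : μ {p : Bid | p.1 ≤ Hval v} ≤ μ {p : Bid | p.1 ≤ b} :=
        measure_mono (fun p hp => le_trans hp hcon)
      rw [hHfull] at this
      exact absurd (le_antisymm prob_le_one this) hne
    have hHS : Hval v ∈ S := ⟨hbH, by rw [hHfull]; exact hlt1⟩
    have hSne : S.Nonempty := ⟨Hval v, hHS⟩
    have hSbdd : BddBelow S := ⟨b, fun x hx => hx.1.le⟩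
    set d := sInf S with hd
    have hcd : c ≤ d := by
      apply le_csInf hSne
      intro x hx
      by_contra hcon
      push_neg at hcon
      have : μ {p : Bid | p.1 ≤ x} ≤ μ {p : Bid | p.1 ≤ c} :=
        measure_mono (fun p hp => le_trans hp hcon.le)
      rw [← hgap] at this
      exact absurd this (not_le.mpr hx.2)
    have hbd : b < d := lt_of_lt_of_le hbc hcd
    have hdH : d ≤ Hval v := csInf_le hSbdd hHS
    have hflat : ∀ x, b ≤ x → x < d → μ {p : Bid | p.1 ≤ x} = μ {p : Bid | p.1 ≤ b} := by
      intro x hbx hxd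
      refine le_antisymm ?_ (measure_mono (fun p hp => le_trans hp hbx))
      have hxS : x ∉ S := fun hxS => absurd (csInf_le hSbdd hxS) (not_le.mpr hxd)
      rcases eq_or_lt_of_le hbx with rfl | hbx'
      · exact le_refl _
      · by_contra hcon
        push_neg at hcon
        exact hxS ⟨hbx', hcon⟩
    have hmidμ : μ {p : Bid | b < p.1 ∧ p.1 < d} = 0 := by
      have hsub : {p : Bid | b < p.1 ∧ p.1 < d} ⊆
          ⋃ n : ℕ, {p : Bid | b < p.1 ∧ p.1 ≤ d - (d - b)/(n+1)} := by
        intro p hp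
        obtain ⟨n, hn⟩ := exists_nat_gt ((d - b)/(d - p.1))
        have hdp : 0 < d - p.1 := by linarith [hp.2]
        have hn1 : (d - b)/(d - p.1) < (n:ℝ) + 1 := by linarith
        have hkey : (d - b)/((n:ℝ)+1) < d - p.1 := by
          rw [div_lt_iff₀ (by positivity)] at hn1 ⊢
          linarith
        exact mem_iUnion.mpr ⟨n, hp.1, by linarith⟩
      apply measure_mono_null hsub
      apply measure_iUnion_null
      intro n
      set x := d - (d - b)/((n:ℝ)+1) with hx
      have hx1 : b ≤ x := by
        rw [hx]
        have hnn : (0:ℝ) ≤ (n:ℝ) := by positivity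
        have : (d - b)/((n:ℝ)+1) ≤ d - b := by
          rw [div_le_iff₀ (by positivity)]
          nlinarith
        linarith
      have hx2 : x < d := by
        rw [hx]
        have : 0 < (d - b)/((n:ℝ)+1) := div_pos (by linarith) (by positivity)
        linarith
      exact measure_Ioc_zero hx1 ((hflat x hx1 hx2).symm)
    have hmidν : ν {p : Bid | b < p.1 ∧ p.1 < d} = 0 := gapOr h hb hmidμ hμ0
    have hnear : ∀ x, d < x → 0 < μ {p : Bid | d ≤ p.1 ∧ p.1 ≤ x} := by
      intro x hx
      obtain ⟨y, hyS, hyx⟩ := (csInf_lt_iff hSbdd hSne).mp hx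
      have hdy : d ≤ y := csInf_le hSbdd hyS
      have hposmid : 0 < μ {p : Bid | b < p.1 ∧ p.1 ≤ y} := by
        rw [pos_iff_ne_zero]
        intro h0
        have hsub2 : {p : Bid | p.1 ≤ y} ⊆
            {p : Bid | p.1 ≤ b} ∪ {p : Bid | b < p.1 ∧ p.1 ≤ y} := by
          intro p hp
          rcases le_or_gt p.1 b with h1 | h1
          · exact Or.inl h1
          · exact Or.inr ⟨h1, hp⟩
        have := (measure_mono hsub2).trans (measure_union_le (μ := μ) _ _)
        rw [h0, add_zero] at this
        exact absurd this (not_le.mpr hyS.2)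
      have hsub3 : {p : Bid | b < p.1 ∧ p.1 ≤ y} ⊆
          {p : Bid | b < p.1 ∧ p.1 < d} ∪ {p : Bid | d ≤ p.1 ∧ p.1 ≤ x} := by
        intro p hp
        rcases lt_or_ge p.1 d with h1 | h1
        · exact Or.inl ⟨hp.1, h1⟩
        · exact Or.inr ⟨h1, le_trans hp.2 hyx.le⟩
      have := (measure_mono hsub3).trans (measure_union_le (μ := μ) _ _)
      rw [hmidμ, zero_add] at this
      exact lt_of_lt_of_le hposmid this
    set Fb := (ν {p : Bid | p.1 ≤ b}).toReal with hFbdef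
    set Gb := (μ {p : Bid | p.1 ≤ b}).toReal with hGbdef
    have hFb : 0 < Fb := ENNReal.toReal_pos hν0.ne' (measure_ne_top _ _)
    have hGb : 0 < Gb := ENNReal.toReal_pos hμ0.ne' (measure_ne_top _ _)
    set e := (b + d)/2 with he
    have he1 : b < e := by rw [he]; linarith
    have he2 : e < d := by rw [he]; linarith
    have he0 : 0 < e := by linarith
    have heH : e ≤ Hval v := by linarith
    have hmidν_ae : ∀ᵐ p ∂ν, ¬(b < p.1 ∧ p.1 < d) := by
      rw [ae_iff]; simp only [not_not]; exact hmidν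
    have hmidμ_ae : ∀ᵐ a ∂μ, ¬(b < a.1 ∧ a.1 < d) := by
      rw [ae_iff]; simp only [not_not]; exact hmidμ
    -- Step E': OR has an atom at d
    have hatomν : 0 < ν {p : Bid | p.1 = d} := by
      have key : ∀ n : ℕ, (d - e) * Fb ≤
          (ν {p : Bid | d ≤ p.1 ∧ p.1 ≤ d + 1/((n:ℝ)+1)}).toReal := by
        intro n
        set x := d + 1/((n:ℝ)+1) with hxdef
        have hdx : d < x := by
          rw [hxdef]; have : (0:ℝ) < 1/((n:ℝ)+1) := by positivity
          linarith
        obtain ⟨a, hamem, habox, habest⟩ : ∃ a : Bid, (d ≤ a.1 ∧ a.1 ≤ x) ∧ a ∈ box v ∧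
            ∀ a' ∈ box v, (∫ p, uAnd T a' p ∂ν) ≤ ∫ p, uAnd T a p ∂ν := by
          obtain ⟨a, ha1, ha2, ha3⟩ := exists_of_ae_of_pos (nash_and_ae h) (hnear x hdx)
          exact ⟨a, ha1, ha2, ha3⟩
        have ha'box : ((e, a.2) : Bid) ∈ box v := ⟨⟨he0.le, heH⟩, habox.2⟩
        have hle := habest (e, a.2) ha'box
        have hint1 := integrable_uAnd_slice h (e, a.2)
        have hint2 := integrable_uAnd_slice h a
        have hψ1 : Integrable ({p : Bid | p.1 ≤ b}.indicator fun _ => d - e) ν :=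
          (integrable_const _).indicator (measSle b)
        have hψ2 : Integrable ({p : Bid | d ≤ p.1 ∧ p.1 ≤ x}.indicator fun _ => (-1:ℝ)) ν :=
          (integrable_const _).indicator (measSicc d x)
        have hψle : (({p : Bid | p.1 ≤ b}.indicator fun _ => d - e) +
            ({p : Bid | d ≤ p.1 ∧ p.1 ≤ x}.indicator fun _ => (-1:ℝ))) ≤ᵐ[ν]
            fun p => uAnd T (e, a.2) p - uAnd T a p := by
          filter_upwards [hmidν_ae] with p hp
          simp only [Pi.add_apply]
          rcases le_or_gt p.1 b with h1 | h1
          · rw [indicator_of_mem (by exact h1 : p ∈ {p : Bid | p.1 ≤ b}),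
              indicator_of_notMem (by
                simp only [mem_setOf_eq, not_and, not_le]
                intro hdp; linarith)]
            have w1e : w1 T ((e, a.2) : Bid).1 p.1 = 1 := w1_of_gt T (lt_of_le_of_lt h1 he1)
            have w1a : w1 T a.1 p.1 = 1 := w1_of_gt T (by linarith [hamem.1])
            simp only [uAnd_eq, w1e, w1a]
            have := hamem.1
            ring_nf
            linarith
          · have hpd : d ≤ p.1 := by
              by_contra hcon; push_neg at hcon; exact hp ⟨h1, hcon⟩
            rw [indicator_of_notMem (by simp only [mem_setOf_eq, not_le]; exact h1)]
            rcases le_or_gt p.1 x with h2 | h2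
            · rw [indicator_of_mem (by exact ⟨hpd, h2⟩ :
                  p ∈ {p : Bid | d ≤ p.1 ∧ p.1 ≤ x})]
              have w1e : w1 T ((e, a.2) : Bid).1 p.1 = 0 := w1_of_lt T (by
                show e < p.1; linarith)
              have hW0 := w1_nonneg T a.1 p.1
              have hW1 := w1_le_one T a.1 p.1
              have hw0 := w2_nonneg T a.2 p.2
              have hw1 := w2_le_one T a.2 p.2
              have ha10 : (0:ℝ) ≤ a.1 := habox.1.1
              have hWw : w1 T a.1 p.1 * w2 T a.2 p.2 ≤ 1 := by nlinarith
              simp only [uAnd_eq, w1e]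
              nlinarith [hWw, mul_nonneg hW0 ha10]
            · rw [indicator_of_notMem (by
                simp only [mem_setOf_eq, not_and, not_le]
                intro _; exact h2)]
              have w1e : w1 T ((e, a.2) : Bid).1 p.1 = 0 := w1_of_lt T (by
                show e < p.1; linarith)
              have w1a : w1 T a.1 p.1 = 0 := w1_of_lt T (by linarith [hamem.2])
              simp only [uAnd_eq, w1e, w1a]
              ring_nf
              exact le_refl _
        have hmono := integral_mono_ae (hψ1.add hψ2) (hint1.sub hint2) hψle
        simp only [Pi.sub_apply, Pi.add_apply] at hmono
        rw [integral_sub hint1 hint2, integral_add hψ1 hψ2,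
          integral_indicator (measSle b), setIntegral_const, measureReal_def,
          integral_indicator (measSicc d x), setIntegral_const, measureReal_def, smul_eq_mul,
          smul_eq_mul, ← hFbdef] at hmono
        linarith [hmono, hle]
      set Sn : ℕ → Set Bid := fun n => {p : Bid | d ≤ p.1 ∧ p.1 ≤ d + 1/((n:ℝ)+1)} with hSn
      have hmeas : ∀ n, MeasurableSet (Sn n) := fun n => measSicc _ _
      have hanti : Antitone Sn := by
        intro n m hnm p hp
        refine ⟨hp.1, le_trans hp.2 ?_⟩
        have h1 : (1:ℝ)/((m:ℝ)+1) ≤ 1/((n:ℝ)+1) := by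
          apply one_div_le_one_div_of_le (by positivity)
          have : (n:ℝ) ≤ (m:ℝ) := Nat.cast_le.mpr hnm
          linarith
        linarith
      have hiInter : (⋂ n, Sn n) = {p : Bid | p.1 = d} := by
        ext p
        simp only [mem_iInter, hSn, mem_setOf_eq]
        constructor
        · intro hall
          have h1 : d ≤ p.1 := (hall 0).1
          by_contra hne'
          have h2' : d < p.1 := lt_of_le_of_ne h1 (Ne.symm hne')
          obtain ⟨n, hn⟩ := exists_nat_one_div_lt (show (0:ℝ) < p.1 - d by linarith)
          have := (hall n).2
          linarith
        · intro hp n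
          refine ⟨le_of_eq hp.symm, ?_⟩
          rw [hp]
          have : (0:ℝ) < 1/((n:ℝ)+1) := by positivity
          linarith
      have htend := tendsto_toReal_iInter (κ := ν) hmeas hanti
      rw [hiInter] at htend
      have hge : (d - e) * Fb ≤ (ν {p : Bid | p.1 = d}).toReal :=
        ge_of_tendsto' htend key
      rw [pos_iff_ne_zero]
      intro h0
      rw [h0] at hge
      simp only [ENNReal.toReal_zero] at hge
      exact absurd hge (not_le.mpr (mul_pos (by linarith) hFb))
    -- OR's best response at its atom
    obtain ⟨qstar, hqd, hqbox, hqbest⟩ : ∃ q : Bid, q.1 = d ∧ q ∈ box v ∧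
        ∀ q' ∈ box v, (∫ a, uOr v T a q' ∂μ) ≤ ∫ a, uOr v T a q ∂μ := by
      obtain ⟨q, hq1, hq2, hq3⟩ := exists_of_ae_of_pos (nash_or_ae h) hatomν
      exact ⟨q, hq1, hq2, hq3⟩
    set αμ := (μ {p : Bid | p.1 = d}).toReal with hαμ
    set Iμ := ∫ a in {p : Bid | p.1 = d}, w2 T a.2 qstar.2 ∂μ with hIμ
    set Lv := d * αμ - v * Iμ with hLv
    set tt := T.t1 d with htt
    have htt0 : 0 ≤ tt := T.t1_nonneg d
    have htt1' : tt ≤ 1 := T.t1_le_one d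
    have hIμnn : 0 ≤ Iμ := setIntegral_nonneg (measSeq d) (fun p _ => w2_nonneg T p.2 qstar.2)
    have hIμle : Iμ ≤ αμ := by
      have := integral_mono (μ := μ.restrict {p : Bid | p.1 = d})
        (integrable_w2_fst T qstar.2).integrableOn (integrable_const 1).integrableOn
        (fun p => w2_le_one T p.2 qstar.2)
      rwa [setIntegral_const, measureReal_def, smul_eq_mul, mul_one] at this
    have hαnn : 0 ≤ αμ := ENNReal.toReal_nonneg
    -- Step G': OR's down-deviation from its atom
    have hstepG : (d - e) * Gb + (1 - tt) * Lv ≤ 0 := by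
      have hq'box : ((e, qstar.2) : Bid) ∈ box v := ⟨⟨he0.le, heH⟩, hqbox.2⟩
      have hle := hqbest (e, qstar.2) hq'box
      have hint1 := integrable_uOr_slice h (e, qstar.2)
      have hint2 := integrable_uOr_slice h qstar
      have hψ1 : Integrable ({a : Bid | a.1 ≤ b}.indicator fun _ => d - e) μ :=
        (integrable_const _).indicator (measSle b)
      have hψ2 : Integrable ({a : Bid | a.1 = d}.indicator
          fun a => (1-tt) * d + (-((1-tt)*v)) * w2 T a.2 qstar.2) μ :=
        (integrable_affine_w2' T qstar.2 ((1-tt)*d) (-((1-tt)*v))).indicator (measSeq d)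
      have hψle : (({a : Bid | a.1 ≤ b}.indicator fun _ => d - e) +
          ({a : Bid | a.1 = d}.indicator
            fun a => (1-tt) * d + (-((1-tt)*v)) * w2 T a.2 qstar.2)) ≤ᵐ[μ]
          fun a => uOr v T a (e, qstar.2) - uOr v T a qstar := by
        filter_upwards [hmidμ_ae] with a ha
        simp only [Pi.add_apply]
        rcases le_or_gt a.1 b with h1 | h1
        · rw [indicator_of_mem (by exact h1 : a ∈ {p : Bid | p.1 ≤ b}),
            indicator_of_notMem (by
              simp only [mem_setOf_eq]; intro heq; rw [heq] at h1; linarith)]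
          have w1e : w1 T a.1 ((e, qstar.2) : Bid).1 = 0 := w1_of_lt T (lt_of_le_of_lt h1 he1)
          have w1d : w1 T a.1 d = 0 := w1_of_lt T (by linarith)
          simp only [uOr_eq, hqd, w1e, w1d]
          ring_nf
          exact le_refl _
        · have had : d ≤ a.1 := by
            by_contra hcon; push_neg at hcon; exact ha ⟨h1, hcon⟩
          rw [indicator_of_notMem (by simp only [mem_setOf_eq, not_le]; exact h1)]
          rcases eq_or_lt_of_le had with heq | hlt
          · rw [indicator_of_mem (by exact heq.symm : a ∈ {p : Bid | p.1 = d})]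
            have w1e : w1 T d ((e, qstar.2) : Bid).1 = 1 := w1_of_gt T (by
              show e < d; linarith)
            have w1d : w1 T d d = tt := by rw [w1_of_eq T rfl]
            simp only [uOr_eq, hqd, ← heq, w1e, w1d]
            ring_nf
            exact le_refl _
          · rw [indicator_of_notMem (by
              simp only [mem_setOf_eq]; intro heq; rw [heq] at hlt; exact lt_irrefl d hlt)]
            have w1e : w1 T a.1 ((e, qstar.2) : Bid).1 = 1 := w1_of_gt T (by
              show e < a.1; linarith)
            have w1d : w1 T a.1 d = 1 := w1_of_gt T hlt
            simp only [uOr_eq, hqd, w1e, w1d]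
            ring_nf
            exact le_refl _
      have hmono := integral_mono_ae (hψ1.add hψ2) (hint1.sub hint2) hψle
      simp only [Pi.sub_apply, Pi.add_apply] at hmono
      rw [integral_sub hint1 hint2, integral_add hψ1 hψ2,
        integral_indicator (measSle b), setIntegral_const, measureReal_def,
        integral_indicator (measSeq d),
        setIntegral_affine_w2' T qstar.2 ((1-tt)*d) (-((1-tt)*v)) (measSeq d),
        smul_eq_mul, ← hGbdef, ← hαμ, ← hIμ] at hmono
      have hLL : (1-tt) * Lv = (1-tt) * d * αμ + (-((1-tt)*v)) * Iμ := by rw [hLv]; ring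
      linarith [hmono, hle]
    have htlt : tt < 1 := by
      rcases lt_or_ge tt 1 with h1 | h1
      · exact h1
      · have : tt = 1 := le_antisymm htt1' h1
        rw [this] at hstepG
        simp at hstepG
        exact absurd hstepG (not_le.mpr (by nlinarith))
    have hLvneg : Lv < 0 := by
      rcases lt_or_ge Lv 0 with h1 | h1
      · exact h1
      · nlinarith [mul_nonneg (by linarith : (0:ℝ) ≤ 1 - tt) h1]
    have hdv : d < v := by
      by_contra hcon
      push_neg at hcon
      have : v * Iμ ≤ d * αμ := by
        calc v * Iμ ≤ v * αμ := by nlinarith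
          _ ≤ d * αμ := by nlinarith
      rw [hLv] at hLvneg
      linarith
    have hatomμ : 0 < μ {p : Bid | p.1 = d} := by
      rw [pos_iff_ne_zero]
      intro h0
      have hα0 : αμ = 0 := by rw [hαμ, h0]; simp
      have hI0 : Iμ = 0 := by
        rw [hIμ, Measure.restrict_eq_zero.mpr h0, integral_zero_measure]
      rw [hLv, hα0, hI0] at hLvneg
      simp at hLvneg
    -- Step H': OR's up-deviation from its atom forces t1 d = 0
    have htt_eq : tt = 0 := by
      have hkeyH : ∀ n : ℕ, tt * (v * Iμ - d * αμ) ≤ 2 * min (1/((n:ℝ)+1)) (v - d)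
          + v * (μ {p : Bid | d < p.1 ∧ p.1 ≤ d + min (1/((n:ℝ)+1)) (v - d)}).toReal := by
        intro n
        set ε := min (1/((n:ℝ)+1)) (v - d) with hεdef
        have hε0 : 0 < ε := lt_min (by positivity) (by linarith)
        have hε1 : ε ≤ v - d := min_le_right _ _
        have hq'box : ((d + ε, qstar.2) : Bid) ∈ box v := by
          refine ⟨⟨?_, ?_⟩, hqbox.2⟩
          · show (0:ℝ) ≤ d + ε
            linarith
          · show d + ε ≤ Hval v
            have h2 : d + ε ≤ v := by linarith
            have : v ≤ Hval v := le_max_right _ _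
            linarith
        have hle := hqbest (d + ε, qstar.2) hq'box
        have hint1 := integrable_uOr_slice h (d + ε, qstar.2)
        have hint2 := integrable_uOr_slice h qstar
        have hψ1 : Integrable ({a : Bid | a.1 < d}.indicator fun _ => -ε) μ :=
          (integrable_const _).indicator (measSlt d)
        have hψ2 : Integrable ({a : Bid | a.1 = d}.indicator
            fun a => (-(tt*d) - ε) + (tt*v) * w2 T a.2 qstar.2) μ :=
          (integrable_affine_w2' T qstar.2 (-(tt*d) - ε) (tt*v)).indicator (measSeq d)
        have hψ3 : Integrable ({a : Bid | d < a.1 ∧ a.1 ≤ d + ε}.indicator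
            fun _ => -v) μ :=
          (integrable_const _).indicator (measSioc d (d+ε))
        have hψle : (({a : Bid | a.1 < d}.indicator fun _ => -ε) +
            ({a : Bid | a.1 = d}.indicator
              fun a => (-(tt*d) - ε) + (tt*v) * w2 T a.2 qstar.2) +
            ({a : Bid | d < a.1 ∧ a.1 ≤ d + ε}.indicator fun _ => -v)) ≤ᵐ[μ]
            fun a => uOr v T a (d + ε, qstar.2) - uOr v T a qstar := by
          apply ae_of_all
          intro a
          simp only [Pi.add_apply]
          rcases lt_trichotomy a.1 d with h1 | h1 | h1
          · rw [indicator_of_mem (by exact h1 : a ∈ {p : Bid | p.1 < d}),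
              indicator_of_notMem (by
                simp only [mem_setOf_eq]; intro heq; rw [heq] at h1; exact lt_irrefl d h1),
              indicator_of_notMem (by
                simp only [mem_setOf_eq, not_and, not_le]; intro hda; linarith)]
            have w1u : w1 T a.1 ((d + ε, qstar.2) : Bid).1 = 0 := w1_of_lt T (by
              show a.1 < d + ε; linarith)
            have w1d : w1 T a.1 d = 0 := w1_of_lt T h1
            simp only [uOr_eq, hqd, w1u, w1d]
            ring_nf
            exact le_refl _
          · rw [indicator_of_notMem (by
                simp only [mem_setOf_eq, not_lt]; exact le_of_eq h1.symm),
              indicator_of_mem (by exact h1 : a ∈ {p : Bid | p.1 = d}),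
              indicator_of_notMem (by
                simp only [mem_setOf_eq, not_and, not_le]; intro hda; rw [h1] at hda
                exact absurd hda (lt_irrefl d))]
            have w1u : w1 T d ((d + ε, qstar.2) : Bid).1 = 0 := w1_of_lt T (by
              show d < d + ε; linarith)
            have w1d : w1 T d d = tt := by rw [w1_of_eq T rfl]
            simp only [uOr_eq, hqd, h1, w1u, w1d]
            ring_nf
            exact le_refl _
          · rw [indicator_of_notMem (by
                simp only [mem_setOf_eq, not_lt]; exact h1.le),
              indicator_of_notMem (by
                simp only [mem_setOf_eq]; intro heq; rw [heq] at h1; exact lt_irrefl d h1)]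
            have w1d : w1 T a.1 d = 1 := w1_of_gt T h1
            rcases le_or_gt a.1 (d + ε) with h2 | h2
            · rw [indicator_of_mem (by exact ⟨h1, h2⟩ :
                  a ∈ {p : Bid | d < p.1 ∧ p.1 ≤ d + ε})]
              have hW0 := w1_nonneg T a.1 (d + ε)
              have hW1 := w1_le_one T a.1 (d + ε)
              have hw0 := w2_nonneg T a.2 qstar.2
              have hw1 := w2_le_one T a.2 qstar.2
              have hd0 : (0:ℝ) < d := by linarith
              simp only [uOr_eq, hqd, w1d]
              have hA : 0 ≤ v * ((1 - w1 T a.1 (d + ε)) * w2 T a.2 qstar.2) :=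
                mul_nonneg hv0.le (mul_nonneg (by linarith) hw0)
              have hB : (1 - w1 T a.1 (d + ε)) * (d + ε) ≤ d + ε :=
                mul_le_of_le_one_left (by linarith) (by linarith)
              nlinarith [hA, hB]
            · rw [indicator_of_notMem (by
                simp only [mem_setOf_eq, not_and, not_le]; intro _; exact h2)]
              have w1u : w1 T a.1 ((d + ε, qstar.2) : Bid).1 = 1 := w1_of_gt T (by
                show d + ε < a.1; exact h2)
              simp only [uOr_eq, hqd, w1u, w1d]
              ring_nf
              exact le_refl _
        have hmono := integral_mono_ae ((hψ1.add hψ2).add hψ3) (hint1.sub hint2) hψle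
        simp only [Pi.sub_apply, Pi.add_apply] at hmono
        have h12 : Integrable (fun a : Bid => ({p : Bid | p.1 < d}.indicator fun _ => -ε) a
            + ({p : Bid | p.1 = d}.indicator
              fun a => (-(tt*d) - ε) + (tt*v) * w2 T a.2 qstar.2) a) μ := hψ1.add hψ2
        rw [integral_sub hint1 hint2, integral_add h12 hψ3, integral_add hψ1 hψ2,
          integral_indicator (measSlt d), setIntegral_const, measureReal_def,
          integral_indicator (measSeq d),
          setIntegral_affine_w2' T qstar.2 (-(tt*d) - ε) (tt*v) (measSeq d),
          integral_indicator (measSioc d (d+ε)), setIntegral_const, measureReal_def,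
          smul_eq_mul, smul_eq_mul, ← hαμ, ← hIμ] at hmono
        have hP1 : (μ {p : Bid | p.1 < d}).toReal ≤ 1 := toReal_prob_le_one _
        have hP0 : 0 ≤ (μ {p : Bid | p.1 < d}).toReal := ENNReal.toReal_nonneg
        have hQ0 : 0 ≤ (μ {p : Bid | d < p.1 ∧ p.1 ≤ d + ε}).toReal := ENNReal.toReal_nonneg
        have hα1 : αμ ≤ 1 := toReal_prob_le_one _
        nlinarith [hmono, hle, mul_le_of_le_one_right hε0.le hP1,
          mul_le_of_le_one_right hε0.le hα1]
      have htendε : Tendsto (fun n : ℕ => min (1/((n:ℝ)+1)) (v - d)) atTop (𝓝 0) := by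
        apply squeeze_zero (fun n => le_of_lt (lt_min (by positivity) (by linarith)))
          (fun n => min_le_left _ _)
        exact tendsto_one_div_add_atTop_nhds_zero_nat
      set Tn : ℕ → Set Bid :=
        fun n => {p : Bid | d < p.1 ∧ p.1 ≤ d + min (1/((n:ℝ)+1)) (v - d)} with hTn
      have hmeasT : ∀ n, MeasurableSet (Tn n) := fun n => measSioc _ _
      have hantiT : Antitone Tn := by
        intro n m hnm p hp
        refine ⟨hp.1, le_trans hp.2 ?_⟩
        have h1 : (1:ℝ)/((m:ℝ)+1) ≤ 1/((n:ℝ)+1) := by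
          apply one_div_le_one_div_of_le (by positivity)
          have : (n:ℝ) ≤ (m:ℝ) := Nat.cast_le.mpr hnm
          linarith
        have := min_le_min h1 (le_refl (v - d))
        linarith
      have hiT : (⋂ n, Tn n) = (∅ : Set Bid) := by
        ext p
        simp only [mem_iInter, hTn, mem_setOf_eq, mem_empty_iff_false, iff_false, not_forall]
        by_contra hcon
        push_neg at hcon
        obtain ⟨n, hn⟩ := exists_nat_one_div_lt (show (0:ℝ) < p.1 - d from
          sub_pos.mpr (hcon 0).1)
        have h2 := (hcon n).2
        have h3 : min (1/((n:ℝ)+1)) (v - d) ≤ 1/((n:ℝ)+1) := min_le_left _ _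
        linarith
      have htendT := tendsto_toReal_iInter (κ := μ) hmeasT hantiT
      rw [hiT, measure_empty] at htendT
      simp only [ENNReal.toReal_zero] at htendT
      have hrn : Tendsto (fun n : ℕ => 2 * min (1/((n:ℝ)+1)) (v - d)
          + v * (μ (Tn n)).toReal) atTop (𝓝 0) := by
        have := (htendε.const_mul 2).add (htendT.const_mul v)
        simpa using this
      have hfin : tt * (v * Iμ - d * αμ) ≤ 0 := ge_of_tendsto' hrn hkeyH
      by_contra htc
      have httpos : 0 < tt := lt_of_le_of_ne htt0 (Ne.symm htc)
      have hpos2 : 0 < v * Iμ - d * αμ := by rw [hLv] at hLvneg; linarith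
      nlinarith [mul_pos httpos hpos2]
    -- Step J': AND's down-deviation from its atom: contradiction
    obtain ⟨astar, hamem, habox, habest⟩ : ∃ a : Bid, a.1 = d ∧ a ∈ box v ∧
        ∀ a' ∈ box v, (∫ p, uAnd T a' p ∂ν) ≤ ∫ p, uAnd T a p ∂ν := by
      obtain ⟨a, ha1, ha2, ha3⟩ := exists_of_ae_of_pos (nash_and_ae h) hatomμ
      exact ⟨a, ha1, ha2, ha3⟩
    have ha'box : ((e, astar.2) : Bid) ∈ box v := ⟨⟨he0.le, heH⟩, habox.2⟩
    have hle := habest (e, astar.2) ha'box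
    have hint1 := integrable_uAnd_slice h (e, astar.2)
    have hint2 := integrable_uAnd_slice h astar
    have hψint : Integrable ({p : Bid | p.1 ≤ b}.indicator fun _ => d - e) ν :=
      (integrable_const _).indicator (measSle b)
    have hψle : ({p : Bid | p.1 ≤ b}.indicator fun _ => d - e) ≤ᵐ[ν]
        fun p => uAnd T (e, astar.2) p - uAnd T astar p := by
      filter_upwards [hmidν_ae] with p hp
      rcases le_or_gt p.1 b with h1 | h1
      · rw [indicator_of_mem (by exact h1 : p ∈ {p : Bid | p.1 ≤ b})]
        have w1e : w1 T ((e, astar.2) : Bid).1 p.1 = 1 := w1_of_gt T (lt_of_le_of_lt h1 he1)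
        have w1a : w1 T d p.1 = 1 := w1_of_gt T (by linarith)
        simp only [uAnd_eq, hamem, w1e, w1a]
        ring_nf
        exact le_refl _
      · have hpd : d ≤ p.1 := by
          by_contra hcon; push_neg at hcon; exact hp ⟨h1, hcon⟩
        rw [indicator_of_notMem (by simp only [mem_setOf_eq, not_le]; exact h1)]
        rcases eq_or_lt_of_le hpd with heq | hlt
        · have w1e : w1 T ((e, astar.2) : Bid).1 p.1 = 0 := w1_of_lt T (by
            show e < p.1; linarith)
          have w1a : w1 T d p.1 = 0 := by
            have h2 := htt_eq
            rw [htt] at h2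
            rw [w1_of_eq T heq]
            exact h2
          simp only [uAnd_eq, hamem, w1e, w1a]
          ring_nf
          exact le_refl _
        · have w1e : w1 T ((e, astar.2) : Bid).1 p.1 = 0 := w1_of_lt T (by
            show e < p.1; linarith)
          have w1a : w1 T d p.1 = 0 := w1_of_lt T hlt
          simp only [uAnd_eq, hamem, w1e, w1a]
          ring_nf
          exact le_refl _
    have hmono := integral_mono_ae hψint (hint1.sub hint2) hψle
    simp only [Pi.sub_apply] at hmono
    rw [integral_sub hint1 hint2, integral_indicator (measSle b), setIntegral_const, measureReal_def,
      smul_eq_mul, ← hFbdef] at hmono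
    nlinarith [mul_pos hFb (by linarith : (0:ℝ) < d - e)]
  exact ⟨hmu1, tailOr h hb hmu1⟩

end Var2Main

section Swap

/-- The tie rule with the two items interchanged. -/
def TieRule.swap (T : TieRule) : TieRule :=
  ⟨T.t2, T.t1, T.meas2, T.meas1, T.t2_nonneg, T.t2_le_one, T.t1_nonneg, T.t1_le_one⟩

lemma uAnd_swap (T : TieRule) (a b : Bid) :
    uAnd T.swap (Prod.swap a) (Prod.swap b) = uAnd T a b := by
  have e1 : q1 T.swap (Prod.swap a) (Prod.swap b) = q2 T a b := rfl
  have e2 : q2 T.swap (Prod.swap a) (Prod.swap b) = q1 T a b := rfl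
  have e3 : (Prod.swap a).1 = a.2 := rfl
  have e4 : (Prod.swap a).2 = a.1 := rfl
  unfold uAnd
  rw [e1, e2, e3, e4]
  ring

lemma uOr_swap (v : ℝ) (T : TieRule) (a b : Bid) :
    uOr v T.swap (Prod.swap a) (Prod.swap b) = uOr v T a b := by
  have e1 : q1 T.swap (Prod.swap a) (Prod.swap b) = q2 T a b := rfl
  have e2 : q2 T.swap (Prod.swap a) (Prod.swap b) = q1 T a b := rfl
  have e3 : (Prod.swap b).1 = b.2 := rfl
  have e4 : (Prod.swap b).2 = b.1 := rfl
  unfold uOr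
  rw [e1, e2, e3, e4]
  ring

lemma uAnd_swap' (T : TieRule) (a b : Bid) :
    uAnd T.swap a (Prod.swap b) = uAnd T (Prod.swap a) b := by
  have := uAnd_swap T (Prod.swap a) b
  rwa [Prod.swap_swap] at this

lemma uOr_swap' (v : ℝ) (T : TieRule) (a b : Bid) :
    uOr v T.swap (Prod.swap a) b = uOr v T a (Prod.swap b) := by
  have := uOr_swap v T a (Prod.swap b)
  rwa [Prod.swap_swap] at this

lemma box_swap (v : ℝ) : Prod.swap ⁻¹' box v = box v := by
  ext p
  simp only [mem_preimage, box, Set.mem_prod]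
  exact and_comm

lemma map_swap_le (κ : Measure Bid) (r : ℝ) :
    (κ.map Prod.swap) {p : Bid | p.1 ≤ r} = κ {p : Bid | p.2 ≤ r} := by
  rw [Measure.map_apply measurable_swap (measSle r)]
  rfl

lemma isNash_swap {v : ℝ} {T : TieRule} {μ ν : Measure Bid} (h : IsNash v T μ ν) :
    IsNash v T.swap (μ.map Prod.swap) (ν.map Prod.swap) := by
  obtain ⟨⟨hμp, hμb⟩, ⟨hνp, hνb⟩, hA, hO⟩ := h
  haveI := hμp; haveI := hνp
  have hint1 := integrable_uAnd_prod ⟨⟨hμp, hμb⟩, ⟨hνp, hνb⟩, hA, hO⟩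
  have hint2 := integrable_uOr_prod ⟨⟨hμp, hμb⟩, ⟨hνp, hνb⟩, hA, hO⟩
  have hprodmap : (μ.map Prod.swap).prod (ν.map Prod.swap)
      = (μ.prod ν).map (Prod.map Prod.swap Prod.swap) :=
    Measure.map_prod_map _ _ measurable_swap measurable_swap
  have hUAnd : UAnd T.swap (μ.map Prod.swap) (ν.map Prod.swap) = UAnd T μ ν := by
    unfold UAnd
    rw [hprodmap, integral_map (measurable_swap.prodMap measurable_swap).aemeasurable
      (measurable_uAnd T.swap).aestronglyMeasurable]
    apply integral_congr_ae
    apply ae_of_all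
    intro p
    exact uAnd_swap T p.1 p.2
  have hUOr : UOr v T.swap (μ.map Prod.swap) (ν.map Prod.swap) = UOr v T μ ν := by
    unfold UOr
    rw [hprodmap, integral_map (measurable_swap.prodMap measurable_swap).aemeasurable
      (measurable_uOr v T.swap).aestronglyMeasurable]
    apply integral_congr_ae
    apply ae_of_all
    intro p
    exact uOr_swap v T p.1 p.2
  refine ⟨⟨?_, ?_⟩, ⟨?_, ?_⟩, ?_, ?_⟩
  · exact Measure.isProbabilityMeasure_map measurable_swap.aemeasurable
  · rw [Measure.map_apply measurable_swap (meas_box v), box_swap]; exact hμb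
  · exact Measure.isProbabilityMeasure_map measurable_swap.aemeasurable
  · rw [Measure.map_apply measurable_swap (meas_box v), box_swap]; exact hνb
  · intro a ha
    have hbox : Prod.swap a ∈ box v := by
      rw [← box_swap v]; exact ha
    have hmint : AEStronglyMeasurable (fun b' => uAnd T.swap a b') ν := by
      exact ((measurable_uAnd T.swap).comp (measurable_const.prodMk measurable_id)).aestronglyMeasurable
    rw [integral_map measurable_swap.aemeasurable
      (by exact ((measurable_uAnd T.swap).comp
        (measurable_const.prodMk measurable_id)).aestronglyMeasurable)]
    have : ∫ b', uAnd T.swap a (Prod.swap b') ∂ν = ∫ b', uAnd T (Prod.swap a) b' ∂ν := by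
      apply integral_congr_ae
      apply ae_of_all
      intro b'
      exact uAnd_swap' T a b'
    rw [this, hUAnd]
    exact hA (Prod.swap a) hbox
  · intro q hq
    have hbox : Prod.swap q ∈ box v := by
      rw [← box_swap v]; exact hq
    rw [integral_map measurable_swap.aemeasurable
      (by exact ((measurable_uOr v T.swap).comp
        (measurable_id.prodMk measurable_const)).aestronglyMeasurable)]
    have : ∫ a', uOr v T.swap (Prod.swap a') q ∂μ = ∫ a', uOr v T a' (Prod.swap q) ∂μ := by
      apply integral_congr_ae
      apply ae_of_all
      intro a'
      exact uOr_swap' v T a' q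
    rw [this, hUOr]
    exact hO (Prod.swap q) hbox

end Swap

/-- In any mixed Nash equilibrium `(μ,ν)` with `v > 1/2`: if `0 < b < c`,
one player never bids in `(b,c]` on an item, and both players bid at most `b` on that
item with positive probability, then both players always bid at most `b` on that item.
All four variants (each player, each item) are stated. -/
theorem support_interval (v : ℝ) (hv : 1/2 < v) (T : TieRule)
    (μ ν : Measure Bid) (h : IsNash v T μ ν)
    (b c : ℝ) (hb : 0 < b) (hbc : b < c) :
    ((ν {p : Bid | p.1 ≤ b} = ν {p : Bid | p.1 ≤ c} ∧
        0 < ν {p : Bid | p.1 ≤ b} ∧ 0 < μ {p : Bid | p.1 ≤ b}) →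
      (ν {p : Bid | p.1 ≤ b} = 1 ∧ μ {p : Bid | p.1 ≤ b} = 1)) ∧
    ((μ {p : Bid | p.1 ≤ b} = μ {p : Bid | p.1 ≤ c} ∧
        0 < μ {p : Bid | p.1 ≤ b} ∧ 0 < ν {p : Bid | p.1 ≤ b}) →
      (μ {p : Bid | p.1 ≤ b} = 1 ∧ ν {p : Bid | p.1 ≤ b} = 1)) ∧
    ((ν {p : Bid | p.2 ≤ b} = ν {p : Bid | p.2 ≤ c} ∧
        0 < ν {p : Bid | p.2 ≤ b} ∧ 0 < μ {p : Bid | p.2 ≤ b}) →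
      (ν {p : Bid | p.2 ≤ b} = 1 ∧ μ {p : Bid | p.2 ≤ b} = 1)) ∧
    ((μ {p : Bid | p.2 ≤ b} = μ {p : Bid | p.2 ≤ c} ∧
        0 < μ {p : Bid | p.2 ≤ b} ∧ 0 < ν {p : Bid | p.2 ≤ b}) →
      (μ {p : Bid | p.2 ≤ b} = 1 ∧ ν {p : Bid | p.2 ≤ b} = 1)) := by
  have hsw := isNash_swap h
  refine ⟨?_, ?_, ?_, ?_⟩
  · rintro ⟨h1, h2, h3⟩
    exact var1 hv h hb hbc h1 h2 h3
  · rintro ⟨h1, h2, h3⟩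
    exact var2 hv h hb hbc h1 h2 h3
  · rintro ⟨h1, h2, h3⟩
    have := var1 hv hsw hb hbc
      (by rw [map_swap_le, map_swap_le]; exact h1)
      (by rw [map_swap_le]; exact h2)
      (by rw [map_swap_le]; exact h3)
    rw [map_swap_le, map_swap_le] at this
    exact this
  · rintro ⟨h1, h2, h3⟩
    have := var2 hv hsw hb hbc
      (by rw [map_swap_le, map_swap_le]; exact h1)
      (by rw [map_swap_le]; exact h2)
      (by rw [map_swap_le]; exact h3)
    rw [map_swap_le, map_swap_le] at this
    exact this
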